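/- arXiv:0804.3493 — 6 statements merged into one kernel-verified Lean document; each statement's English description precedes it below -/
import Mathlib

section
/- Let R be a supercommutative superalgebra over a field of characteristic ≠ 2, and let I be a superideal of R. Then the prime radical of I (intersection of all prime ideals containing I) equals {r ∈ R : ∃ n, rⁿ ∈ I} and also equals {r ∈ R : ∃ n, r₀ⁿ ∈ I₀}, where r₀ is the even component of r. -/
open DirectSum

private lemma aux_half {K A : Type} [Field K] [Ring A] [Algebra K A]
    (hK : (2 : K) ≠ 0) {x : A} (h : x + x = 0) : x = 0 := by
  have h2 : (2 : K) • x = 0 := by rw [two_smul]; exact h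
  calc x = (2 : K)⁻¹ • ((2 : K) • x) := (inv_smul_smul₀ hK x).symm
    _ = 0 := by rw [h2, smul_zero]

private lemma aux_binom {A : Type} [Ring A] {a b : A} (hab : a * b = b * a)
    (hb : b * b = 0) : ∀ n : ℕ, (a + b) ^ (n + 1) = a ^ (n + 1) + (n + 1) • (a ^ n * b) := by
  intro n
  induction n with
  | zero => simp
  | succ m ih =>
    have hba : b * a = a * b := hab.symm
    rw [pow_succ, ih]
    rw [add_mul, mul_add, mul_add, smul_mul_assoc, smul_mul_assoc]
    rw [mul_assoc (a ^ m) b a, hba, ← mul_assoc (a ^ m) a b, ← pow_succ,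
      mul_assoc (a ^ m) b b, hb, mul_zero, smul_zero, add_zero, ← pow_succ]
    rw [add_assoc, add_comm (a ^ (m + 1) * b) ((m + 1) • (a ^ (m + 1) * b)),
      ← succ_nsmul (a ^ (m + 1) * b) (m + 1)]

/-- for a superideal I of a supercommutative superalgebra (char ≠ 2), the
prime radical of I equals {r | ∃ n > 0, rⁿ ∈ I} and equals {r | ∃ n > 0, r₀ⁿ ∈ I} where
r₀ is the even component of r. -/
theorem prime_radical_of_superideal {K A : Type} [Field K] (hK : (2 : K) ≠ 0)
    [Ring A] [Algebra K A] (𝒜 : ZMod 2 → Submodule K A) [GradedAlgebra 𝒜]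
    (hcomm : ∀ (i j : ZMod 2) (a b : A), a ∈ 𝒜 i → b ∈ 𝒜 j →
      a * b = ((-1 : K) ^ (i.val * j.val)) • (b * a))
    (I : Ideal A)
    (hIsuper : I = Ideal.span {x : A | x ∈ I ∧ SetLike.IsHomogeneousElem 𝒜 x})
    (hItwosided : ∀ x ∈ I, ∀ r : A, x * r ∈ I) :
    ((sInf {P : Ideal A | I ≤ P ∧ P.IsPrime} : Ideal A) : Set A)
        = {r : A | ∃ n : ℕ, 0 < n ∧ r ^ n ∈ I} ∧
    {r : A | ∃ n : ℕ, 0 < n ∧ r ^ n ∈ I}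
        = {r : A | ∃ n : ℕ, 0 < n ∧ (GradedAlgebra.proj 𝒜 0 r) ^ n ∈ I} := by
  classical
  -- basic facts about the grading
  have hval0 : (0 : ZMod 2).val = 0 := rfl
  have hval1 : (1 : ZMod 2).val = 1 := rfl
  have hmem : ∀ (i : ZMod 2) (r : A), GradedAlgebra.proj 𝒜 i r ∈ 𝒜 i := by
    intro i r
    rw [GradedAlgebra.proj_apply]
    exact (decompose 𝒜 r i).2
  -- odd elements square to zero
  have hodd2 : ∀ u : A, u ∈ 𝒜 1 → u * u = 0 := by
    intro u hu
    have h := hcomm 1 1 u u hu hu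
    rw [hval1, mul_one, pow_one, neg_smul, one_smul] at h
    exact aux_half hK (eq_neg_iff_add_eq_zero.mp h)
  -- odd elements anticommute
  have hanti : ∀ u v : A, u ∈ 𝒜 1 → v ∈ 𝒜 1 → v * u = -(u * v) := by
    intro u v hu hv
    have h := hcomm 1 1 v u hv hu
    rw [hval1, mul_one, pow_one, neg_smul, one_smul] at h
    exact h
  -- even commutes with odd
  have hev : ∀ e o : A, e ∈ 𝒜 0 → o ∈ 𝒜 1 → e * o = o * e := by
    intro e o he ho
    have h := hcomm 0 1 e o he ho
    rw [hval0, zero_mul, pow_zero, one_smul] at h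
    exact h
  -- even elements commute
  have hev0 : ∀ e f : A, e ∈ 𝒜 0 → f ∈ 𝒜 0 → e * f = f * e := by
    intro e f he hf
    have h := hcomm 0 0 e f he hf
    rw [hval0, mul_zero, pow_zero, one_smul] at h
    exact h
  -- decomposition of an element into even + odd parts
  have hdecomp : ∀ r : A, r = GradedAlgebra.proj 𝒜 0 r + GradedAlgebra.proj 𝒜 1 r := by
    intro r
    have h : ∑ i : ZMod 2, (decompose 𝒜 r i : A) = r :=
      ((Finset.sum_subset (Finset.subset_univ _) (fun i _ hi => by
        rw [DFinsupp.notMem_support_iff.mp hi]; rfl)).symm).trans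
        (DirectSum.sum_support_decompose 𝒜 r)
    have h2 : ∑ i : ZMod 2, (decompose 𝒜 r i : A)
        = (decompose 𝒜 r 0 : A) + (decompose 𝒜 r 1 : A) := by
      rw [show (Finset.univ : Finset (ZMod 2)) = {0, 1} by decide]
      simp
    rw [GradedAlgebra.proj_apply, GradedAlgebra.proj_apply, ← h2, h]
  -- computing the degree-0 projection of an (even + odd) sum
  have hproj0 : ∀ e o : A, e ∈ 𝒜 0 → o ∈ 𝒜 1 → GradedAlgebra.proj 𝒜 0 (e + o) = e := by
    intro e o he ho
    rw [GradedAlgebra.proj_apply]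
    rw [DirectSum.decompose_add, DirectSum.add_apply, AddMemClass.coe_add,
      DirectSum.decompose_of_mem_same 𝒜 he,
      DirectSum.decompose_of_mem_ne 𝒜 ho (by decide : (1 : ZMod 2) ≠ 0), add_zero]
  -- powers of even elements are even
  have hpow0 : ∀ e : A, e ∈ 𝒜 0 → ∀ n : ℕ, e ^ n ∈ 𝒜 0 := by
    intro e he n
    induction n with
    | zero => rw [pow_zero]; exact SetLike.one_mem_graded 𝒜
    | succ m ih =>
      rw [pow_succ]
      have := SetLike.mul_mem_graded ih he
      rwa [add_zero] at this
  -- I is homogeneous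
  have hIhom : Ideal.IsHomogeneous 𝒜 I := by
    rw [hIsuper]
    exact Ideal.homogeneous_span 𝒜 _ (fun x hx => hx.2)
  have hprojI : ∀ i : ZMod 2, ∀ r ∈ I, GradedAlgebra.proj 𝒜 i r ∈ I := by
    intro i r hr
    rw [GradedAlgebra.proj_apply]
    exact hIhom i hr
  -- key binomial identity
  have hkey : ∀ (r : A) (n : ℕ), r ^ (n + 1)
      = (GradedAlgebra.proj 𝒜 0 r) ^ (n + 1)
        + (n + 1) • ((GradedAlgebra.proj 𝒜 0 r) ^ n * GradedAlgebra.proj 𝒜 1 r) := by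
    intro r n
    have h1 : GradedAlgebra.proj 𝒜 0 r * GradedAlgebra.proj 𝒜 1 r
        = GradedAlgebra.proj 𝒜 1 r * GradedAlgebra.proj 𝒜 0 r :=
      hev _ _ (hmem 0 r) (hmem 1 r)
    have h2 : GradedAlgebra.proj 𝒜 1 r * GradedAlgebra.proj 𝒜 1 r = 0 :=
      hodd2 _ (hmem 1 r)
    conv_lhs => rw [hdecomp r]
    exact aux_binom h1 h2 n
  -- the second set equality
  have hset2 : {r : A | ∃ n : ℕ, 0 < n ∧ r ^ n ∈ I}
      = {r : A | ∃ n : ℕ, 0 < n ∧ (GradedAlgebra.proj 𝒜 0 r) ^ n ∈ I} := by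
    ext r
    constructor
    · rintro ⟨n, hn, hrn⟩
      obtain ⟨m, rfl⟩ : ∃ m, n = m + 1 := ⟨n - 1, by omega⟩
      refine ⟨m + 1, Nat.succ_pos m, ?_⟩
      have h1 : GradedAlgebra.proj 𝒜 0 (r ^ (m + 1))
          = (GradedAlgebra.proj 𝒜 0 r) ^ (m + 1) := by
        rw [hkey r m]
        exact hproj0 _ _ (hpow0 _ (hmem 0 r) (m + 1))
          (nsmul_mem (by
            have := SetLike.mul_mem_graded (hpow0 _ (hmem 0 r) m) (hmem 1 r)
            rwa [zero_add] at this) (m + 1))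
      rw [← h1]
      exact hprojI 0 _ hrn
    · rintro ⟨n, hn, hrn⟩
      refine ⟨n + 1, Nat.succ_pos n, ?_⟩
      rw [hkey r n]
      refine I.add_mem ?_ ?_
      · rw [pow_succ]
        exact hItwosided _ hrn _
      · exact nsmul_mem (hItwosided _ hrn _) (n + 1)
  refine ⟨?_, hset2⟩
  -- the first set equality
  ext r
  simp only [SetLike.mem_coe, Submodule.mem_sInf, Set.mem_setOf_eq]
  constructor
  · -- hard direction: in all primes over I implies some power in I
    intro hr
    by_contra hcon
    push_neg at hcon
    -- no power of the even part is in I either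
    have hcon0 : ∀ n : ℕ, 0 < n → (GradedAlgebra.proj 𝒜 0 r) ^ n ∉ I := by
      intro n hn h
      have : r ∈ {r : A | ∃ n : ℕ, 0 < n ∧ r ^ n ∈ I} := by
        rw [hset2]; exact ⟨n, hn, h⟩
      obtain ⟨m, hm, hmI⟩ := this
      exact hcon m hm hmI
    -- work in the commutative ring 𝒜 0
    letI : CommRing ↥(𝒜 0) :=
      { (inferInstance : Ring ↥(𝒜 0)) with
        mul_comm := fun x y => Subtype.ext (hev0 _ _ x.2 y.2) }
    let I₀ : Ideal ↥(𝒜 0) :=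
      { carrier := {x : ↥(𝒜 0) | (x : A) ∈ I}
        zero_mem' := by simp only [Set.mem_setOf_eq, ZeroMemClass.coe_zero]; exact I.zero_mem
        add_mem' := fun hx hy => by
          simp only [Set.mem_setOf_eq, AddMemClass.coe_add] at *
          exact I.add_mem hx hy
        smul_mem' := fun c x hx => by
          simp only [Set.mem_setOf_eq, smul_eq_mul] at *
          exact Ideal.mul_mem_left I _ hx }
    -- everything odd times odd lands in every prime of ↥(𝒜 0)
    have hoddsq : ∀ (u v : A) (hu : u ∈ 𝒜 1) (hv : v ∈ 𝒜 1),
        u * v ∈ 𝒜 0 := by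
      intro u v hu hv
      have := SetLike.mul_mem_graded hu hv
      rwa [show (1 : ZMod 2) + 1 = 0 by decide] at this
    set r₀ : ↥(𝒜 0) := ⟨GradedAlgebra.proj 𝒜 0 r, hmem 0 r⟩ with hr₀
    have hrad : r₀ ∉ I₀.radical := by
      rintro ⟨n, hn⟩
      have hcoe : ∀ m : ℕ, ((r₀ ^ m : ↥(𝒜 0)) : A) = (GradedAlgebra.proj 𝒜 0 r) ^ m := by
        intro m
        induction m with
        | zero => simp
        | succ k ih => rw [pow_succ, pow_succ, ← ih]; rfl
      have hnI : (GradedAlgebra.proj 𝒜 0 r) ^ n ∈ I := by rw [← hcoe n]; exact hn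
      rcases Nat.eq_zero_or_pos n with h0 | hpos
      · subst h0
        rw [pow_zero] at hnI
        exact hcon 1 one_pos (by
          rw [pow_one]
          have := hItwosided 1 hnI r
          rwa [one_mul] at this)
      · exact hcon0 n hpos hnI
    rw [Ideal.radical_eq_sInf, Submodule.mem_sInf] at hrad
    push_neg at hrad
    obtain ⟨p, ⟨hI₀p, hp⟩, hr₀p⟩ := hrad
    -- products of two odd elements lie in p
    have hoddp : ∀ (u v : A) (hu : u ∈ 𝒜 1) (hv : v ∈ 𝒜 1),
        (⟨u * v, hoddsq u v hu hv⟩ : ↥(𝒜 0)) ∈ p := by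
      intro u v hu hv
      set w : ↥(𝒜 0) := ⟨u * v, hoddsq u v hu hv⟩ with hw
      have hw2 : w * w = 0 := by
        apply Subtype.ext
        show (u * v) * (u * v) = (0 : A)
        calc (u * v) * (u * v) = u * ((v * u) * v) := by noncomm_ring
          _ = u * (-(u * v) * v) := by rw [hanti u v hu hv]
          _ = -(u * u * (v * v)) := by noncomm_ring
          _ = 0 := by rw [hodd2 u hu, zero_mul, neg_zero]
      rcases hp.mem_or_mem (show w * w ∈ p by rw [hw2]; exact p.zero_mem) with h | h
      · exact h
      · exact h
    -- degree-zero component of a product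
    have hmul0 : ∀ a b : A, GradedAlgebra.proj 𝒜 0 (a * b)
        = GradedAlgebra.proj 𝒜 0 a * GradedAlgebra.proj 𝒜 0 b
          + GradedAlgebra.proj 𝒜 1 a * GradedAlgebra.proj 𝒜 1 b := by
      intro a b
      have hexp : a * b
          = (GradedAlgebra.proj 𝒜 0 a * GradedAlgebra.proj 𝒜 0 b
              + GradedAlgebra.proj 𝒜 1 a * GradedAlgebra.proj 𝒜 1 b)
            + (GradedAlgebra.proj 𝒜 0 a * GradedAlgebra.proj 𝒜 1 b
              + GradedAlgebra.proj 𝒜 1 a * GradedAlgebra.proj 𝒜 0 b) := by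
        conv_lhs => rw [hdecomp a, hdecomp b]
        noncomm_ring
      rw [hexp]
      apply hproj0
      · refine Submodule.add_mem _ ?_ ?_
        · have := SetLike.mul_mem_graded (hmem 0 a) (hmem 0 b)
          rwa [add_zero] at this
        · exact hoddsq _ _ (hmem 1 a) (hmem 1 b)
      · refine Submodule.add_mem _ ?_ ?_
        · have := SetLike.mul_mem_graded (hmem 0 a) (hmem 1 b)
          rwa [zero_add] at this
        · have := SetLike.mul_mem_graded (hmem 1 a) (hmem 0 b)
          rwa [add_zero] at this
    -- membership in p of the even component, as an element of ↥(𝒜 0)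
    have hmulB : ∀ a b : A,
        (⟨GradedAlgebra.proj 𝒜 0 (a * b), hmem 0 (a * b)⟩ : ↥(𝒜 0))
          = (⟨GradedAlgebra.proj 𝒜 0 a, hmem 0 a⟩ : ↥(𝒜 0))
              * (⟨GradedAlgebra.proj 𝒜 0 b, hmem 0 b⟩ : ↥(𝒜 0))
            + (⟨GradedAlgebra.proj 𝒜 1 a * GradedAlgebra.proj 𝒜 1 b,
                hoddsq _ _ (hmem 1 a) (hmem 1 b)⟩ : ↥(𝒜 0)) := by
      intro a b
      apply Subtype.ext
      exact hmul0 a b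
    -- the prime ideal P of A
    let P : Ideal A :=
      { carrier := {a : A | (⟨GradedAlgebra.proj 𝒜 0 a, hmem 0 a⟩ : ↥(𝒜 0)) ∈ p}
        zero_mem' := by
          have : (⟨GradedAlgebra.proj 𝒜 0 (0 : A), hmem 0 0⟩ : ↥(𝒜 0)) = 0 := by
            apply Subtype.ext; simp
          simp only [Set.mem_setOf_eq, this]
          exact p.zero_mem
        add_mem' := by
          intro x y hx hy
          have : (⟨GradedAlgebra.proj 𝒜 0 (x + y), hmem 0 (x + y)⟩ : ↥(𝒜 0))
              = ⟨GradedAlgebra.proj 𝒜 0 x, hmem 0 x⟩ + ⟨GradedAlgebra.proj 𝒜 0 y, hmem 0 y⟩ := by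
            apply Subtype.ext; simp
          simp only [Set.mem_setOf_eq] at *
          rw [this]
          exact p.add_mem hx hy
        smul_mem' := by
          intro c x hx
          simp only [Set.mem_setOf_eq, smul_eq_mul] at *
          rw [hmulB c x]
          exact p.add_mem (Ideal.mul_mem_left p _ hx) (hoddp _ _ (hmem 1 c) (hmem 1 x)) }
    have hPprime : P.IsPrime := by
      constructor
      · intro htop
        have h1 : (1 : A) ∈ P := htop ▸ Submodule.mem_top
        have : (⟨GradedAlgebra.proj 𝒜 0 (1 : A), hmem 0 1⟩ : ↥(𝒜 0)) = 1 := by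
          apply Subtype.ext
          show GradedAlgebra.proj 𝒜 0 (1 : A) = 1
          rw [GradedAlgebra.proj_apply]
          exact DirectSum.decompose_of_mem_same 𝒜 (SetLike.one_mem_graded 𝒜)
        have h2 : (1 : ↥(𝒜 0)) ∈ p := by rw [← this]; exact h1
        exact hp.ne_top ((Ideal.eq_top_iff_one p).mpr h2)
      · intro x y hxy
        have hxy' : (⟨GradedAlgebra.proj 𝒜 0 (x * y), hmem 0 (x * y)⟩ : ↥(𝒜 0)) ∈ p := hxy
        rw [hmulB x y] at hxy'
        have hodd : (⟨GradedAlgebra.proj 𝒜 1 x * GradedAlgebra.proj 𝒜 1 y,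
            hoddsq _ _ (hmem 1 x) (hmem 1 y)⟩ : ↥(𝒜 0)) ∈ p :=
          hoddp _ _ (hmem 1 x) (hmem 1 y)
        have hprod : (⟨GradedAlgebra.proj 𝒜 0 x, hmem 0 x⟩ : ↥(𝒜 0))
            * (⟨GradedAlgebra.proj 𝒜 0 y, hmem 0 y⟩ : ↥(𝒜 0)) ∈ p := by
          have := p.sub_mem hxy' hodd
          rwa [add_sub_cancel_right] at this
        rcases hp.mem_or_mem hprod with h | h
        · exact Or.inl h
        · exact Or.inr h
    have hIP : I ≤ P := by
      intro x hx
      show (⟨GradedAlgebra.proj 𝒜 0 x, hmem 0 x⟩ : ↥(𝒜 0)) ∈ p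
      exact hI₀p (hprojI 0 x hx)
    exact hr₀p (hr P ⟨hIP, hPprime⟩)
  · -- easy direction
    rintro ⟨n, hn, hrn⟩ P ⟨hIP, hP⟩
    obtain ⟨m, rfl⟩ : ∃ m, n = m + 1 := ⟨n - 1, by omega⟩
    have hpowP : ∀ k : ℕ, r ^ (k + 1) ∈ P → r ∈ P := by
      intro k
      induction k with
      | zero => rw [pow_one]; exact id
      | succ j ih =>
        intro h
        rw [pow_succ] at h
        rcases hP.mem_or_mem h with h' | h'
        · exact ih h'
        · exact h'
    exact hpowP m (hIP hrn)
end

section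
/- Let A be a supercommutative superalgebra over a field of characteristic ≠ 2, and suppose elements a₁, …, aₙ ∈ A generate A as a left ideal. Then the even components a₁,₀, …, aₙ,₀ of these elements also generate A as an ideal. -/
/-- if a₁, …, aₙ generate a supercommutative superalgebra A (char ≠ 2) as a
left ideal, then their even components generate A as an ideal. -/
theorem even_components_generate {K A : Type} [Field K] (hK : (2 : K) ≠ 0)
    [Ring A] [Algebra K A] (𝒜 : ZMod 2 → Submodule K A) [GradedAlgebra 𝒜]
    (hcomm : ∀ (i j : ZMod 2) (a b : A), a ∈ 𝒜 i → b ∈ 𝒜 j →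
      a * b = ((-1 : K) ^ (i.val * j.val)) • (b * a))
    (n : ℕ) (a : Fin n → A)
    (h : Ideal.span (Set.range a) = ⊤) :
    Ideal.span (Set.range fun i => GradedAlgebra.proj 𝒜 0 (a i)) = ⊤ := by
  classical
  set e : Fin n → A := fun i => GradedAlgebra.proj 𝒜 0 (a i) with he
  set b : Fin n → A := fun i => GradedAlgebra.proj 𝒜 1 (a i) with hb
  -- every element decomposes as its even plus odd part
  have hsplit : ∀ x : A,
      x = GradedAlgebra.proj 𝒜 0 x + GradedAlgebra.proj 𝒜 1 x := by
    intro x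
    have hsupp := DirectSum.sum_support_decompose 𝒜 x
    have hsub : (DirectSum.decompose 𝒜 x).support ⊆ (Finset.univ : Finset (ZMod 2)) :=
      Finset.subset_univ _
    have : (∑ i : ZMod 2, (DirectSum.decompose 𝒜 x i : A)) = x := by
      calc ∑ i : ZMod 2, (DirectSum.decompose 𝒜 x i : A)
          = ∑ i ∈ (DirectSum.decompose 𝒜 x).support, (DirectSum.decompose 𝒜 x i : A) :=
            (Finset.sum_subset hsub (fun i _ hi => by
              simp [DFinsupp.notMem_support_iff.mp hi])).symm
        _ = x := hsupp
    have huniv : (Finset.univ : Finset (ZMod 2)) = {0, 1} := by decide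
    rw [huniv] at this
    rw [Finset.sum_insert (by decide), Finset.sum_singleton] at this
    simpa [GradedAlgebra.proj_apply] using this.symm
  have hbmem : ∀ i, b i ∈ 𝒜 1 := by
    intro i
    rw [hb]
    simp only [GradedAlgebra.proj_apply]
    exact (DirectSum.decompose 𝒜 (a i) 1).2
  have h0val : ((0 : ZMod 2)).val = 0 := rfl
  have h1val : ((1 : ZMod 2)).val = 1 := rfl
  -- odd elements commute with even ones, anticommute with odd ones
  have hswap : ∀ (x : A) (q : A), q ∈ 𝒜 1 →
      q * x = (GradedAlgebra.proj 𝒜 0 x - GradedAlgebra.proj 𝒜 1 x) * q := by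
    intro x q hq
    have hx0 : GradedAlgebra.proj 𝒜 0 x ∈ 𝒜 0 := by
      simp only [GradedAlgebra.proj_apply]; exact (DirectSum.decompose 𝒜 x 0).2
    have hx1 : GradedAlgebra.proj 𝒜 1 x ∈ 𝒜 1 := by
      simp only [GradedAlgebra.proj_apply]; exact (DirectSum.decompose 𝒜 x 1).2
    have h0 := hcomm 0 1 (GradedAlgebra.proj 𝒜 0 x) q hx0 hq
    have h1 := hcomm 1 1 (GradedAlgebra.proj 𝒜 1 x) q hx1 hq
    simp only [h0val, h1val, Nat.zero_mul, Nat.one_mul, pow_zero, pow_one, neg_smul,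
      one_smul] at h0 h1
    have h1' : q * GradedAlgebra.proj 𝒜 1 x = -(GradedAlgebra.proj 𝒜 1 x * q) := by
      rw [h1, neg_neg]
    conv_lhs => rw [hsplit x]
    rw [mul_add, ← h0, h1', sub_mul, sub_eq_add_neg]
  have hanti : ∀ (p q : A), p ∈ 𝒜 1 → q ∈ 𝒜 1 → p * q = -(q * p) := by
    intro p q hp hq
    have := hcomm 1 1 p q hp hq
    rw [h1val] at this
    simpa [pow_one] using this
  have hsq : ∀ (p : A), p ∈ 𝒜 1 → p * p = 0 := by
    intro p hp
    have h1 := hanti p p hp hp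
    have h2 : (2 : K) • (p * p) = 0 := by
      rw [two_smul]
      nth_rewrite 2 [h1]
      simp
    have := congrArg (fun z : A => (2 : K)⁻¹ • z) h2
    simpa [smul_smul, inv_mul_cancel₀ hK] using this
  -- product of a list of b's with a repeated index is zero
  have hmove : ∀ (l : List (Fin n)) (i : Fin n),
      (l.map b).prod * b i = ((-1 : K) ^ l.length) • (b i * (l.map b).prod) := by
    intro l i
    induction l with
    | nil => simp
    | cons y t ih =>
      simp only [List.map_cons, List.prod_cons, List.length_cons]
      rw [mul_assoc, ih, mul_smul_comm, ← mul_assoc, hanti (b y) (b i) (hbmem y) (hbmem i),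
        neg_mul, smul_neg, ← neg_smul, mul_assoc]
      congr 1
      rw [pow_succ]
      ring
  have hdup : ∀ l : List (Fin n), ¬ l.Nodup → (l.map b).prod = 0 := by
    intro l
    induction l with
    | nil => intro hl; exact absurd List.nodup_nil hl
    | cons x t ih =>
      intro hl
      by_cases hx : x ∈ t
      · obtain ⟨s, u, rfl⟩ := List.append_of_mem hx
        simp only [List.map_cons, List.map_append, List.prod_cons, List.prod_append]
        rw [← mul_assoc (List.map b s).prod, hmove s x, smul_mul_assoc, mul_smul_comm,
          ← mul_assoc, ← mul_assoc, hsq (b x) (hbmem x), zero_mul, zero_mul, smul_zero]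
      · have : ¬ t.Nodup := by
          intro hn
          exact hl (List.nodup_cons.mpr ⟨hx, hn⟩)
        simp [List.prod_cons, ih this]
  -- the set of products of k odd generators
  set S : ℕ → Set A := fun k => {y | ∃ l : List (Fin n), l.length = k ∧ (l.map b).prod = y}
    with hS
  have hstep : ∀ (k : ℕ) (i : Fin n) (y : A), y ∈ Submodule.span A (S k) →
      b i * y ∈ Submodule.span A (S (k + 1)) := by
    intro k i y hy
    induction hy using Submodule.span_induction with
    | mem z hz =>
      obtain ⟨l, hlen, hprod⟩ := hz
      refine Submodule.subset_span ⟨i :: l, by simp [hlen], ?_⟩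
      simp [List.prod_cons, hprod]
    | zero => simp
    | add u v _ _ hu hv => rw [mul_add]; exact Submodule.add_mem _ hu hv
    | smul c u _ hu =>
      rw [smul_eq_mul, ← mul_assoc, hswap c (b i) (hbmem i), mul_assoc]
      exact Submodule.smul_mem _ _ hu
  -- 1 is a left combination of the a i
  have h1mem : (1 : A) ∈ Ideal.span (Set.range a) := h ▸ Submodule.mem_top
  rw [Ideal.span, Submodule.mem_span_range_iff_exists_fun] at h1mem
  obtain ⟨r, hr⟩ := h1mem
  set x : A := ∑ i, r i * b i with hx
  set y : A := ∑ i, r i * e i with hy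
  have hxy : y + x = 1 := by
    rw [hy, hx, ← Finset.sum_add_distrib]
    rw [← hr]
    refine Finset.sum_congr rfl fun i _ => ?_
    rw [smul_eq_mul, ← mul_add]
    congr 1
    exact (hsplit (a i)).symm
  have hpow : ∀ k : ℕ, x ^ k ∈ Submodule.span A (S k) := by
    intro k
    induction k with
    | zero =>
      refine Submodule.subset_span ⟨[], rfl, ?_⟩
      simp
    | succ k ih =>
      rw [pow_succ']
      rw [hx, Finset.sum_mul]
      refine Submodule.sum_mem _ fun i _ => ?_
      rw [mul_assoc]
      have := hstep k i (x ^ k) ih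
      simpa using Submodule.smul_mem (Submodule.span A (S (k + 1))) (r i) this
  have hnil : x ^ (n + 1) = 0 := by
    have hbot : Submodule.span A (S (n + 1)) = ⊥ := by
      rw [Submodule.span_eq_bot]
      rintro z ⟨l, hlen, hprod⟩
      rw [← hprod]
      refine hdup l ?_
      intro hnd
      have := List.Nodup.length_le_card hnd
      rw [hlen] at this
      simp at this
    have := hpow (n + 1)
    rw [hbot] at this
    simpa using this
  -- finish: 1 = (∑ x^k) * y ∈ span of even components
  rw [Ideal.eq_top_iff_one]
  have hymem : y ∈ Ideal.span (Set.range e) := by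
    refine Submodule.sum_mem _ fun i _ => ?_
    exact Ideal.mul_mem_left _ _ (Ideal.subset_span ⟨i, rfl⟩)
  have hgeom : (∑ k ∈ Finset.range (n + 1), x ^ k) * y = 1 := by
    have hy1 : y = 1 - x := by rw [← hxy, add_sub_cancel_right]
    rw [hy1]
    have := geom_sum_mul x (n + 1)
    rw [hnil] at this
    have h2 : (∑ k ∈ Finset.range (n + 1), x ^ k) * (1 - x) =
        -((∑ k ∈ Finset.range (n + 1), x ^ k) * (x - 1)) := by
      rw [mul_sub, mul_sub, mul_one, neg_sub]
    rw [h2, this]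
    simp
  rw [← hgeom]
  exact Ideal.mul_mem_left _ _ hymem
end

section
/- Let A be a supercommutative superalgebra over a field of characteristic ≠ 2, and let M be a maximal left ideal of A. Then M = M₀ + A₁ where M₀ = M ∩ A₀ is a maximal ideal of A₀; in particular M is a two-sided superideal. -/
/-- a maximal left ideal M of a supercommutative superalgebra (char ≠ 2)
has the form M = M₀ + A₁ with M₀ = M ∩ A₀ a maximal ideal of A₀; in particular M is a
two-sided superideal. -/
theorem maximal_left_ideal_of_superalgebra {K A : Type} [Field K] (hK : (2 : K) ≠ 0)
    [Ring A] [Algebra K A] (𝒜 : ZMod 2 → Submodule K A) [GradedAlgebra 𝒜]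
    (hcomm : ∀ (i j : ZMod 2) (a b : A), a ∈ 𝒜 i → b ∈ 𝒜 j →
      a * b = ((-1 : K) ^ (i.val * j.val)) • (b * a))
    (M : Ideal A) (hM : M.IsMaximal) :
    (∀ x ∈ 𝒜 1, x ∈ M) ∧
    (∀ r ∈ M, GradedAlgebra.proj 𝒜 0 r ∈ M) ∧
    (∀ x ∈ M, ∀ r : A, x * r ∈ M) ∧
    (∀ a : A, a ∈ 𝒜 0 → a ∉ M → ∃ m ∈ M, m ∈ 𝒜 0 ∧ ∃ b ∈ 𝒜 0, m + b * a = 1) := by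
  have hdec : ∀ (p : A → Prop), p 0 → (∀ (i : ZMod 2) (a : A), a ∈ 𝒜 i → p a) →
      (∀ a b : A, p a → p b → p (a + b)) → ∀ a : A, p a := by
    intro p h0 hhom hadd a
    exact DirectSum.Decomposition.inductionOn 𝒜 h0 (fun x => hhom _ x x.2) hadd a
  have hsame : ∀ (i : ZMod 2) (x : A), x ∈ 𝒜 i → GradedAlgebra.proj 𝒜 i x = x := by
    intro i x hx
    rw [GradedAlgebra.proj_apply, DirectSum.decompose_of_mem_same 𝒜 hx]
  have hne : ∀ (i j : ZMod 2), i ≠ j → ∀ x ∈ 𝒜 i, GradedAlgebra.proj 𝒜 j x = 0 := by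
    intro i j hij x hx
    rw [GradedAlgebra.proj_apply, DirectSum.decompose_of_mem_ne 𝒜 hx hij]
  -- odd squares vanish
  have hsq : ∀ x ∈ 𝒜 1, x * x = (0 : A) := by
    intro x hx
    have h := hcomm 1 1 x x hx hx
    have h1 : ((1 : ZMod 2).val * (1 : ZMod 2).val) = 1 := rfl
    rw [h1, pow_one, neg_smul, one_smul] at h
    have h2 : (2 : K) • (x * x) = 0 := by
      rw [two_smul]
      nth_rewrite 1 [h]
      simp
    rcases smul_eq_zero.mp h2 with h3 | h3
    · exact absurd h3 hK
    · exact h3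
  have hxax : ∀ x ∈ 𝒜 1, ∀ a : A, x * a * x = 0 := by
    intro x hx
    refine hdec (fun a => x * a * x = 0) (by simp) ?_ ?_
    · intro i a ha
      rw [hcomm 1 i x a hx ha, smul_mul_assoc, mul_assoc, hsq x hx, mul_zero, smul_zero]
    · intro a b ha hb
      rw [mul_add, add_mul, ha, hb, add_zero]
  -- part 1
  have hodd : ∀ x ∈ 𝒜 1, x ∈ M := by
    intro x hx
    by_contra hxM
    have hlt : M < M ⊔ Ideal.span {x} := by
      refine lt_of_le_of_ne le_sup_left (fun h => hxM ?_)
      rw [h]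
      exact Submodule.mem_sup_right (Ideal.subset_span rfl)
    have htop : M ⊔ Ideal.span {x} = ⊤ := hM.1.2 _ hlt
    have h1 : (1 : A) ∈ M ⊔ Ideal.span {x} := htop ▸ Submodule.mem_top
    rcases Submodule.mem_sup.mp h1 with ⟨m, hm, y, hy, hmy⟩
    rcases Submodule.mem_span_singleton.mp hy with ⟨a, rfl⟩
    rw [smul_eq_mul] at hmy
    have hy2 : (a * x) * (a * x) = 0 := by
      rw [mul_assoc a x (a * x), ← mul_assoc x a x, hxax x hx a, mul_zero]
    have hme : m = 1 - a * x := eq_sub_of_add_eq hmy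
    have hone : (1 + a * x) * m = 1 := by
      rw [hme]
      have h2 : (1 + a * x) * (1 - a * x) = 1 - (a * x) * (a * x) := by noncomm_ring
      rw [h2, hy2, sub_zero]
    have : (1 : A) ∈ M := hone ▸ Ideal.mul_mem_left _ _ hm
    exact hM.ne_top (Ideal.eq_top_iff_one M |>.mpr this)
  have hproj : ∀ (i : ZMod 2) (r : A), GradedAlgebra.proj 𝒜 i r ∈ 𝒜 i := by
    intro i r
    rw [GradedAlgebra.proj_apply]
    exact (DirectSum.decompose 𝒜 r i).2
  have hcases : ∀ j : ZMod 2, j = 0 ∨ j = 1 := by decide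
  have hsum : ∀ r : A, GradedAlgebra.proj 𝒜 0 r + GradedAlgebra.proj 𝒜 1 r = r := by
    refine hdec _ (by simp) ?_ ?_
    · intro i a ha
      rcases hcases i with rfl | rfl
      · rw [hsame 0 a ha, hne 0 1 (by decide) a ha, add_zero]
      · rw [hsame 1 a ha, hne 1 0 (by decide) a ha, zero_add]
    · intro a b ha hb
      rw [map_add, map_add,
        show GradedAlgebra.proj 𝒜 0 a + GradedAlgebra.proj 𝒜 0 b +
          (GradedAlgebra.proj 𝒜 1 a + GradedAlgebra.proj 𝒜 1 b) =
          GradedAlgebra.proj 𝒜 0 a + GradedAlgebra.proj 𝒜 1 a +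
          (GradedAlgebra.proj 𝒜 0 b + GradedAlgebra.proj 𝒜 1 b) by abel, ha, hb]
  -- part 2
  have hproj0 : ∀ r ∈ M, GradedAlgebra.proj 𝒜 0 r ∈ M := by
    intro r hr
    have h1 : GradedAlgebra.proj 𝒜 1 r ∈ M := hodd _ (hproj 1 r)
    have h2 : GradedAlgebra.proj 𝒜 0 r = r - GradedAlgebra.proj 𝒜 1 r :=
      eq_sub_of_add_eq (hsum r)
    rw [h2]
    exact Submodule.sub_mem M hr h1
  -- closure under right multiplication
  have hMright : ∀ (i : ZMod 2) (m : A), m ∈ M → m ∈ 𝒜 i → ∀ r : A, m * r ∈ M := by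
    intro i m hmM hmi
    refine hdec (fun r => m * r ∈ M) (by simp) ?_ ?_
    · intro j a ha
      rw [hcomm i j m a hmi ha, Algebra.smul_def]
      exact Ideal.mul_mem_left _ _ (Ideal.mul_mem_left _ _ hmM)
    · intro a b ha hb
      rw [mul_add]
      exact Submodule.add_mem M ha hb
  have hright : ∀ x ∈ M, ∀ r : A, x * r ∈ M := by
    intro x hx r
    have h0 : GradedAlgebra.proj 𝒜 0 x * r ∈ M := hMright 0 _ (hproj0 x hx) (hproj 0 x) r
    have h1 : GradedAlgebra.proj 𝒜 1 x * r ∈ M := hMright 1 _ (hodd _ (hproj 1 x)) (hproj 1 x) r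
    have h2 : x * r = GradedAlgebra.proj 𝒜 0 x * r + GradedAlgebra.proj 𝒜 1 x * r := by
      rw [← add_mul, hsum]
    rw [h2]
    exact Submodule.add_mem M h0 h1
  refine ⟨hodd, hproj0, hright, ?_⟩
  -- part 4
  intro a ha haM
  have hlt : M < M ⊔ Ideal.span {a} := by
    refine lt_of_le_of_ne le_sup_left (fun h => haM ?_)
    rw [h]
    exact Submodule.mem_sup_right (Ideal.subset_span rfl)
  have htop : M ⊔ Ideal.span {a} = ⊤ := hM.1.2 _ hlt
  have h1 : (1 : A) ∈ M ⊔ Ideal.span {a} := htop ▸ Submodule.mem_top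
  rcases Submodule.mem_sup.mp h1 with ⟨m, hm, y, hy, hmy⟩
  rcases Submodule.mem_span_singleton.mp hy with ⟨c, rfl⟩
  rw [smul_eq_mul] at hmy
  refine ⟨GradedAlgebra.proj 𝒜 0 m, hproj0 m hm, hproj 0 m, GradedAlgebra.proj 𝒜 0 c, hproj 0 c, ?_⟩
  have h0 : GradedAlgebra.proj 𝒜 0 c * a ∈ 𝒜 0 := by
    have := SetLike.mul_mem_graded (hproj 0 c) ha
    simpa using this
  have h1' : GradedAlgebra.proj 𝒜 1 c * a ∈ 𝒜 1 := by
    have := SetLike.mul_mem_graded (hproj 1 c) ha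
    simpa using this
  have hca : GradedAlgebra.proj 𝒜 0 (c * a) = GradedAlgebra.proj 𝒜 0 c * a := by
    have hsplit : c * a = GradedAlgebra.proj 𝒜 0 c * a + GradedAlgebra.proj 𝒜 1 c * a := by
      rw [← add_mul, hsum]
    rw [hsplit, map_add, hsame 0 _ h0, hne 1 0 (by decide) _ h1', add_zero]
  have honem : GradedAlgebra.proj 𝒜 0 (1 : A) = 1 :=
    hsame 0 1 (SetLike.one_mem_graded 𝒜)
  calc GradedAlgebra.proj 𝒜 0 m + GradedAlgebra.proj 𝒜 0 c * a
      = GradedAlgebra.proj 𝒜 0 (m + c * a) := by rw [map_add, hca]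
    _ = 1 := by rw [hmy, honem]
end

section
/- Let A be a superalgebra and φ: M → N an epimorphism of free A-supermodules of the same finite rank (r, s), where A is supercommutative over a field of characteristic ≠ 2. Then φ is an isomorphism. -/
section Aux
variable {K A : Type} [Field K] [Ring A] [Algebra K A]
variable {𝒜 : ZMod 2 → Submodule K A}

lemma aux_odd_swap
    (hcomm : ∀ (i j : ZMod 2) (a b : A), a ∈ 𝒜 i → b ∈ 𝒜 j →
      a * b = ((-1 : K) ^ (i.val * j.val)) • (b * a))
    {v w : A} (hv : v ∈ 𝒜 1) (hw : w ∈ 𝒜 1) : v * w = -(w * v) := by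
  have h := hcomm 1 1 v w hv hw
  have h1 : (1 : ZMod 2).val = 1 := rfl
  rw [h1] at h
  simpa using h

lemma aux_odd_sq (hK : (2:K) ≠ 0)
    (hcomm : ∀ (i j : ZMod 2) (a b : A), a ∈ 𝒜 i → b ∈ 𝒜 j →
      a * b = ((-1 : K) ^ (i.val * j.val)) • (b * a))
    {v : A} (hv : v ∈ 𝒜 1) : v * v = 0 := by
  have h := aux_odd_swap hcomm hv hv
  have h2 : (2:K) • (v * v) = 0 := by
    rw [two_smul]
    nth_rewrite 1 [h]; abel
  have := congrArg (fun x => (2:K)⁻¹ • x) h2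
  simpa [smul_smul, inv_mul_cancel₀ hK] using this
end Aux

section Aux2
variable {K A : Type} [Field K] [Ring A] [Algebra K A]
variable {𝒜 : ZMod 2 → Submodule K A} [DirectSum.Decomposition 𝒜]

lemma aux_odd_mul
    (hcomm : ∀ (i j : ZMod 2) (a b : A), a ∈ 𝒜 i → b ∈ 𝒜 j →
      a * b = ((-1 : K) ^ (i.val * j.val)) • (b * a))
    {v : A} (hv : v ∈ 𝒜 1) (b : A) : ∃ c : A, v * b = c * v := by
  induction b using DirectSum.Decomposition.inductionOn 𝒜 with
  | zero => exact ⟨0, by simp⟩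
  | homogeneous m =>
    rename_i j
    exact ⟨((-1 : K) ^ ((1 : ZMod 2).val * j.val)) • (m : A), by
      rw [hcomm 1 j v m hv m.2, smul_mul_assoc]⟩
  | add x y hx hy =>
    obtain ⟨c, hc⟩ := hx; obtain ⟨d, hd⟩ := hy
    exact ⟨c + d, by rw [mul_add, hc, hd, add_mul]⟩

end Aux2

section Aux3
variable {K A : Type} [Field K] [Ring A] [Algebra K A]
variable {𝒜 : ZMod 2 → Submodule K A} [DirectSum.Decomposition 𝒜]
variable (hcomm : ∀ (i j : ZMod 2) (a b : A), a ∈ 𝒜 i → b ∈ 𝒜 j →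
      a * b = ((-1 : K) ^ (i.val * j.val)) • (b * a))

/-- the left ideal generated by the odd part -/
noncomputable def auxJ (𝒜 : ZMod 2 → Submodule K A) : Ideal A := Ideal.span (𝒜 1 : Set A)

include hcomm in
lemma auxJ_mul_right {x : A} (hx : x ∈ auxJ 𝒜) (b : A) : x * b ∈ auxJ 𝒜 := by
  induction hx using Submodule.span_induction with
  | mem v hv =>
    obtain ⟨c, hc⟩ := aux_odd_mul hcomm hv b
    rw [hc]
    exact Ideal.mul_mem_left _ _ (Ideal.subset_span hv)
  | zero => simp
  | add x y _ _ hx hy => rw [add_mul]; exact (auxJ 𝒜).add_mem hx hy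
  | smul a x _ hx => rw [smul_eq_mul, mul_assoc]; exact Ideal.mul_mem_left _ _ hx

include hcomm in
lemma aux_commutator_mem (a b : A) : a * b - b * a ∈ auxJ 𝒜 := by
  induction a using DirectSum.Decomposition.inductionOn 𝒜 with
  | zero => simp
  | add x y hx hy =>
    have : (x + y) * b - b * (x + y) = (x * b - b * x) + (y * b - b * y) := by noncomm_ring
    rw [this]; exact (auxJ 𝒜).add_mem hx hy
  | homogeneous m =>
    rename_i i
    induction b using DirectSum.Decomposition.inductionOn 𝒜 with
    | zero => simp
    | add x y hx hy =>
      have : (m : A) * (x + y) - (x + y) * m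
          = ((m : A) * x - x * m) + ((m : A) * y - y * m) := by noncomm_ring
      rw [this]; exact (auxJ 𝒜).add_mem hx hy
    | homogeneous b' =>
      rename_i j
      rcases Nat.even_or_odd (i.val * j.val) with he | ho
      · have := hcomm i j m b' m.2 b'.2
        rw [he.neg_one_pow] at this
        rw [this, one_smul, sub_self]
        exact (auxJ 𝒜).zero_mem
      · -- i.val = 1 and j.val = 1
        have hi : i = 1 := by
          have := Nat.odd_mul.mp ho
          have h1 := this.1
          fin_cases i <;> simp_all [ZMod.val] <;> rfl
        have hj : j = 1 := by
          have := Nat.odd_mul.mp ho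
          have h1 := this.2
          fin_cases j <;> simp_all [ZMod.val] <;> rfl
        subst hi; subst hj
        have hswap := aux_odd_swap hcomm m.2 b'.2
        rw [hswap]
        have : -((b' : A) * m) - (b' : A) * m = (-2 : A) • ((b' : A) * (m : A)) := by
          push_cast [neg_smul]
          rw [two_smul]
          abel
        rw [this]
        exact Submodule.smul_mem _ _ (Ideal.mul_mem_left _ _ (Ideal.subset_span m.2))

end Aux3

section Aux4
variable {K A : Type} [Field K] [Ring A] [Algebra K A]
variable {𝒜 : ZMod 2 → Submodule K A}
variable (hK : (2:K) ≠ 0)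
variable (hcomm : ∀ (i j : ZMod 2) (a b : A), a ∈ 𝒜 i → b ∈ 𝒜 j →
      a * b = ((-1 : K) ^ (i.val * j.val)) • (b * a))

include hK hcomm in
lemma aux_mul_prod_zero {v : A} (hv : v ∈ 𝒜 1) :
    ∀ (T : List A), (∀ x ∈ T, x ∈ 𝒜 1) → v ∈ T → v * T.prod = 0 := by
  intro T
  induction T with
  | nil => intro _ h; simp at h
  | cons w T ih =>
    intro hall hmem
    rw [List.prod_cons, ← mul_assoc]
    rcases eq_or_ne v w with rfl | hne
    · rw [aux_odd_sq hK hcomm hv, zero_mul]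
    · have hvT : v ∈ T := by
        rcases List.mem_cons.mp hmem with h | h
        · exact absurd h hne
        · exact h
      have hw : w ∈ 𝒜 1 := hall w (List.mem_cons_self)
      rw [aux_odd_swap hcomm hv hw, neg_mul, mul_assoc,
        ih (fun x hx => hall x (List.mem_cons_of_mem _ hx)) hvT, mul_zero, neg_zero]

include hK hcomm in
lemma aux_dup_prod_zero :
    ∀ (W : List A), (∀ x ∈ W, x ∈ 𝒜 1) → ¬ W.Nodup → W.prod = 0 := by
  intro W
  induction W with
  | nil => intro _ h; exact absurd List.nodup_nil h
  | cons v T ih =>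
    intro hall hnd
    rw [List.prod_cons]
    by_cases hvT : v ∈ T
    · exact aux_mul_prod_zero hK hcomm (hall v (List.mem_cons_self)) T
        (fun x hx => hall x (List.mem_cons_of_mem _ hx)) hvT
    · have : ¬ T.Nodup := fun h => hnd (List.nodup_cons.mpr ⟨hvT, h⟩)
      rw [ih (fun x hx => hall x (List.mem_cons_of_mem _ hx)) this, mul_zero]

end Aux4

section Aux5
variable {K A : Type} [Field K] [Ring A] [Algebra K A]
variable {𝒜 : ZMod 2 → Submodule K A} [DirectSum.Decomposition 𝒜]
variable (hK : (2:K) ≠ 0)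
variable (hcomm : ∀ (i j : ZMod 2) (a b : A), a ∈ 𝒜 i → b ∈ 𝒜 j →
      a * b = ((-1 : K) ^ (i.val * j.val)) • (b * a))

/-- span of products of `k` elements of `V` -/
noncomputable def auxT (V : Finset A) (k : ℕ) : Submodule A A :=
  Submodule.span A {x | ∃ l : List A, (∀ v ∈ l, v ∈ V) ∧ l.length = k ∧ x = l.prod}

include hcomm in
lemma aux_prod_mul {V : Finset A} (hV : ∀ v ∈ V, v ∈ 𝒜 1) :
    ∀ (l : List A), (∀ v ∈ l, v ∈ V) → ∀ b : A, ∃ c, l.prod * b = c * l.prod := by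
  intro l
  induction l with
  | nil => intro _ b; exact ⟨b, by simp⟩
  | cons v T ih =>
    intro hall b
    obtain ⟨c, hc⟩ := ih (fun x hx => hall x (List.mem_cons_of_mem _ hx)) b
    obtain ⟨c', hc'⟩ := aux_odd_mul hcomm (hV v (hall v (List.mem_cons_self))) c
    exact ⟨c', by rw [List.prod_cons, mul_assoc, hc, ← mul_assoc, hc', mul_assoc]⟩

include hcomm in
lemma auxT_mul {V : Finset A} (hV : ∀ v ∈ V, v ∈ 𝒜 1) {k l : ℕ} {x y : A}
    (hx : x ∈ auxT V k) (hy : y ∈ auxT V l) : x * y ∈ auxT V (k + l) := by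
  induction hx using Submodule.span_induction with
  | mem x hxm =>
    obtain ⟨lx, hlx, hlxlen, rfl⟩ := hxm
    induction hy using Submodule.span_induction with
    | mem y hym =>
      obtain ⟨ly, hly, hlylen, rfl⟩ := hym
      rw [← List.prod_append]
      refine Submodule.subset_span ⟨lx ++ ly, ?_, by simp [hlxlen, hlylen], rfl⟩
      intro v hv
      rcases List.mem_append.mp hv with h | h
      · exact hlx v h
      · exact hly v h
    | zero => simp
    | add y z _ _ hy hz => rw [mul_add]; exact Submodule.add_mem _ hy hz
    | smul a y _ hy =>
      obtain ⟨c, hc⟩ := aux_prod_mul hcomm hV lx hlx a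
      rw [smul_eq_mul, ← mul_assoc, hc, mul_assoc, ← smul_eq_mul]
      exact Submodule.smul_mem _ _ hy
  | zero => simp
  | add x z _ _ hx hz => rw [add_mul]; exact Submodule.add_mem _ hx hz
  | smul a x _ hx => rw [smul_eq_mul, mul_assoc, ← smul_eq_mul]; exact Submodule.smul_mem _ _ hx

include hK hcomm in
lemma auxT_top_eq_bot {V : Finset A} (hV : ∀ v ∈ V, v ∈ 𝒜 1) :
    auxT V (V.card + 1) = ⊥ := by
  classical
  rw [auxT, Submodule.span_eq_bot]
  rintro x ⟨l, hl, hlen, rfl⟩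
  apply aux_dup_prod_zero hK hcomm l (fun v hv => hV v (hl v hv))
  intro hnd
  have h1 : l.toFinset.card = l.length := List.toFinset_card_of_nodup hnd
  have h2 : l.toFinset ⊆ V := fun v hv => hl v (List.mem_toFinset.mp hv)
  have := Finset.card_le_card h2
  omega

end Aux5

section Aux6
variable {K A : Type} [Field K] [Ring A] [Algebra K A]
variable {𝒜 : ZMod 2 → Submodule K A} [DirectSum.Decomposition 𝒜]

lemma aux_matrix_inv (hK : (2:K) ≠ 0)
    (hcomm : ∀ (i j : ZMod 2) (a b : A), a ∈ 𝒜 i → b ∈ 𝒜 j →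
      a * b = ((-1 : K) ^ (i.val * j.val)) • (b * a))
    {n : Type} [Fintype n] [DecidableEq n]
    (S R : Matrix n n A) (h : S * R = 1) : R * S = 1 := by
  classical
  -- the two-sided ideal generated by the odd part
  set J : Ideal A := auxJ 𝒜 with hJ
  let J₂ : TwoSidedIdeal A := TwoSidedIdeal.mk' (J : Set A) J.zero_mem
    (fun hx hy => J.add_mem hx hy) (fun hx => J.neg_mem hx)
    (fun hy => Ideal.mul_mem_left _ _ hy) (fun hx => auxJ_mul_right hcomm hx _)
  set c : RingCon A := J₂.ringCon with hc
  let π : A →+* c.Quotient := c.mk'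
  have hker : ∀ x : A, π x = 0 ↔ x ∈ J := by
    intro x
    have h0 : (0 : c.Quotient) = π 0 := by simp
    rw [h0]
    show (x : c.Quotient) = (0 : A) ↔ _
    rw [RingCon.eq]
    have := TwoSidedIdeal.rel_iff J₂ x 0
    rw [hc]
    rw [this, sub_zero, TwoSidedIdeal.mem_mk']
    exact Iff.rfl
  have hcommQ : ∀ x y : c.Quotient, x * y = y * x := by
    intro x y
    induction x using Quotient.inductionOn' with
    | h a =>
      induction y using Quotient.inductionOn' with
      | h b =>
        show π a * π b = π b * π a
        rw [← map_mul, ← map_mul]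
        show ((a*b : A) : c.Quotient) = ((b*a : A) : c.Quotient)
        rw [RingCon.eq, hc, TwoSidedIdeal.rel_iff J₂, TwoSidedIdeal.mem_mk']
        exact aux_commutator_mem hcomm a b
  letI : CommRing c.Quotient :=
    { (inferInstance : Ring c.Quotient) with mul_comm := hcommQ }
  -- reduce mod J
  have h1 : π.mapMatrix R * π.mapMatrix S = 1 := by
    rw [mul_eq_one_comm, ← map_mul, h, map_one]
  have hFJ : ∀ i j, ((1 : Matrix n n A) - R * S) i j ∈ J := by
    intro i j
    rw [← hker]
    have : π.mapMatrix ((1 : Matrix n n A) - R * S) = 0 := by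
      rw [map_sub, map_one, map_mul, h1, sub_self]
    calc π (((1 : Matrix n n A) - R * S) i j)
        = (π.mapMatrix ((1 : Matrix n n A) - R * S)) i j := rfl
      _ = (0 : Matrix n n c.Quotient) i j := by rw [this]
      _ = 0 := rfl
  -- extract finite odd set
  set F : Matrix n n A := (1 : Matrix n n A) - R * S with hF
  have hchoice : ∀ p : n × n, ∃ cf : A →₀ A,
      (cf.support : Set A) ⊆ (𝒜 1 : Set A) ∧ (cf.sum fun mi r => r • mi) = F p.1 p.2 := by
    intro p
    exact Submodule.mem_span_set.mp (hFJ p.1 p.2)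
  choose cf hcf1 hcf2 using hchoice
  set V : Finset A := Finset.univ.biUnion (fun p : n × n => (cf p).support) with hV
  have hVodd : ∀ v ∈ V, v ∈ 𝒜 1 := by
    intro v hv
    rw [hV, Finset.mem_biUnion] at hv
    obtain ⟨p, _, hp⟩ := hv
    exact hcf1 p hp
  have hFT : ∀ i j, F i j ∈ auxT V 1 := by
    intro i j
    rw [← hcf2 (i, j)]
    refine Submodule.sum_mem _ (fun v hv => ?_)
    refine Submodule.smul_mem _ _ (Submodule.subset_span ⟨[v], ?_, rfl, by simp⟩)
    intro w hw
    rw [List.mem_singleton] at hw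
    subst hw
    rw [hV, Finset.mem_biUnion]
    exact ⟨(i, j), Finset.mem_univ _, hv⟩
  have hpow : ∀ k : ℕ, ∀ i j, (F ^ (k + 1)) i j ∈ auxT V (k + 1) := by
    intro k
    induction k with
    | zero => intro i j; rw [pow_one]; exact hFT i j
    | succ k ih =>
      intro i j
      rw [pow_succ, Matrix.mul_apply]
      exact Submodule.sum_mem _ (fun l _ => auxT_mul hcomm hVodd (ih i l) (hFT l j))
  have hFnil : F ^ (V.card + 1) = 0 := by
    ext i j
    have := hpow V.card i j
    rw [auxT_top_eq_bot hK hcomm hVodd, Submodule.mem_bot] at this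
    simpa using this
  have hXX : (R * S) * (R * S) = R * S := by
    rw [Matrix.mul_assoc, ← Matrix.mul_assoc S R, h, Matrix.one_mul]
  have hidem : F * F = F := by
    rw [hF, sub_mul, one_mul, mul_sub, mul_one, hXX, sub_self, sub_zero]
  have hFpow : ∀ k : ℕ, F ^ (k + 1) = F := by
    intro k
    induction k with
    | zero => rw [pow_one]
    | succ k ih => rw [pow_succ, ih, hidem]
  have : F = 0 := by rw [← hFpow V.card, hFnil]
  rw [hF] at this
  have := sub_eq_zero.mp this
  exact this.symm
end Aux6

section Aux7
variable {A : Type} [Ring A]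

lemma aux_coeff {X : Type} [AddCommGroup X] [Module A X] {ι : Type} [Fintype ι]
    (b : Module.Basis ι A X) (x y : ι → A) (h : ∑ k, x k • b k = ∑ k, y k • b k) : x = y := by
  classical
  funext j
  have hx : ∀ z : ι → A, (b.repr (∑ k, z k • b k)) j = z j := by
    intro z
    rw [map_sum]
    simp [Module.Basis.repr_self, Finsupp.single_apply, Finsupp.finset_sum_apply,
      Finset.sum_ite_eq']
  rw [← hx x, ← hx y, h]

lemma aux_comp_matrix {X Y : Type} [AddCommGroup X] [Module A X] [AddCommGroup Y] [Module A Y]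
    {ι : Type} [Fintype ι] [DecidableEq ι]
    (bX : Module.Basis ι A X) (bY : Module.Basis ι A Y) (f : X →ₗ[A] Y) (g : Y →ₗ[A] X) (i : ι) :
    g (f (bX i)) = ∑ k, ((Matrix.of fun p q => bY.repr (f (bX p)) q) *
      (Matrix.of fun p q => bX.repr (g (bY p)) q)) i k • bX k := by
  have h1 : f (bX i) = ∑ j, bY.repr (f (bX i)) j • bY j := (bY.sum_repr _).symm
  calc g (f (bX i)) = g (∑ j, bY.repr (f (bX i)) j • bY j) := by rw [← h1]
    _ = ∑ j, bY.repr (f (bX i)) j • g (bY j) := by simp only [map_sum, map_smul]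
    _ = ∑ j, bY.repr (f (bX i)) j • ∑ k, bX.repr (g (bY j)) k • bX k := by
        simp_rw [Module.Basis.sum_repr]
    _ = ∑ j, ∑ k, (bY.repr (f (bX i)) j * bX.repr (g (bY j)) k) • bX k := by
        simp_rw [Finset.smul_sum, smul_smul]
    _ = ∑ k, ∑ j, (bY.repr (f (bX i)) j * bX.repr (g (bY j)) k) • bX k := Finset.sum_comm
    _ = ∑ k, (∑ j, bY.repr (f (bX i)) j * bX.repr (g (bY j)) k) • bX k := by
        simp_rw [Finset.sum_smul]
    _ = _ := by simp only [Matrix.mul_apply, Matrix.of_apply]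

lemma aux_comp_eq_one {X Y : Type} [AddCommGroup X] [Module A X] [AddCommGroup Y] [Module A Y]
    {ι : Type} [Fintype ι] [DecidableEq ι]
    (bX : Module.Basis ι A X) (bY : Module.Basis ι A Y) (f : X →ₗ[A] Y) (g : Y →ₗ[A] X)
    (h : (Matrix.of fun p q => bY.repr (f (bX p)) q) *
      (Matrix.of fun p q => bX.repr (g (bY p)) q) = 1) (x : X) : g (f x) = x := by
  have hb : ∀ i, g (f (bX i)) = bX i := by
    intro i
    rw [aux_comp_matrix bX bY f g i, h]
    simp [Matrix.one_apply]
  have : (g.comp f) = LinearMap.id := Module.Basis.ext bX hb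
  exact LinearMap.ext_iff.mp this x

lemma aux_matrix_eq_one {X Y : Type} [AddCommGroup X] [Module A X] [AddCommGroup Y] [Module A Y]
    {ι : Type} [Fintype ι] [DecidableEq ι]
    (bX : Module.Basis ι A X) (bY : Module.Basis ι A Y) (f : X →ₗ[A] Y) (g : Y →ₗ[A] X)
    (h : ∀ x, g (f x) = x) :
    (Matrix.of fun p q => bY.repr (f (bX p)) q) *
      (Matrix.of fun p q => bX.repr (g (bY p)) q) = 1 := by
  ext i k
  have := (aux_comp_matrix bX bY f g i).symm.trans (h (bX i))
  have h2 : ∑ k, ((Matrix.of fun p q => bY.repr (f (bX p)) q) *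
      (Matrix.of fun p q => bX.repr (g (bY p)) q)) i k • bX k
      = ∑ k, (1 : Matrix ι ι A) i k • bX k := by
    rw [this]
    simp [Matrix.one_apply]
  exact congrFun (aux_coeff bX _ _ h2) k

end Aux7

/-- an epimorphism φ : M → N of free supermodules of the same finite rank
(r, s) over a supercommutative superalgebra A (char ≠ 2) is an isomorphism. -/
theorem surjective_endo_free_supermodule_bijective {K A : Type} [Field K] (hK : (2 : K) ≠ 0)
    [Ring A] [Algebra K A] (𝒜 : ZMod 2 → Submodule K A) [GradedAlgebra 𝒜]
    (hcomm : ∀ (i j : ZMod 2) (a b : A), a ∈ 𝒜 i → b ∈ 𝒜 j →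
      a * b = ((-1 : K) ^ (i.val * j.val)) • (b * a))
    {M N : Type} [AddCommGroup M] [Module K M] [Module A M] [IsScalarTower K A M]
    [AddCommGroup N] [Module K N] [Module A N] [IsScalarTower K A N]
    (ℳ : ZMod 2 → Submodule K M) [DirectSum.Decomposition ℳ]
    (𝒩 : ZMod 2 → Submodule K N) [DirectSum.Decomposition 𝒩]
    (hMgr : ∀ (i j : ZMod 2) (a : A) (m : M), a ∈ 𝒜 i → m ∈ ℳ j → a • m ∈ ℳ (i + j))
    (hNgr : ∀ (i j : ZMod 2) (a : A) (n : N), a ∈ 𝒜 i → n ∈ 𝒩 j → a • n ∈ 𝒩 (i + j))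
    (r s : ℕ)
    (bM : Module.Basis (Fin r ⊕ Fin s) A M)
    (hbM0 : ∀ i : Fin r, bM (Sum.inl i) ∈ ℳ 0) (hbM1 : ∀ j : Fin s, bM (Sum.inr j) ∈ ℳ 1)
    (bN : Module.Basis (Fin r ⊕ Fin s) A N)
    (hbN0 : ∀ i : Fin r, bN (Sum.inl i) ∈ 𝒩 0) (hbN1 : ∀ j : Fin s, bN (Sum.inr j) ∈ 𝒩 1)
    (φ : M →ₗ[A] N)
    (hgraded : ∀ (i : ZMod 2), ∀ m ∈ ℳ i, φ m ∈ 𝒩 i)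
    (hsurj : Function.Surjective φ) :
    Function.Bijective φ := by
  classical
  let ψ : N →ₗ[A] M := bN.constr ℕ (fun i => Classical.choose (hsurj (bN i)))
  have hψ : ∀ i, φ (ψ (bN i)) = bN i := by
    intro i
    have h1 : ψ (bN i) = Classical.choose (hsurj (bN i)) := bN.constr_basis ℕ _ i
    rw [h1]
    exact Classical.choose_spec (hsurj (bN i))
  have hφψ : ∀ y : N, φ (ψ y) = y := by
    intro y
    have h2 : (φ.comp ψ) = LinearMap.id := Module.Basis.ext bN (fun i => by simpa using hψ i)
    simpa using LinearMap.ext_iff.mp h2 y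
  have hSR := aux_matrix_eq_one bN bM ψ φ hφψ
  have hRS := aux_matrix_inv (𝒜 := 𝒜) hK hcomm _ _ hSR
  have hinj : ∀ x, ψ (φ x) = x := aux_comp_eq_one bM bN φ ψ hRS
  constructor
  · intro x y hxy
    have h3 := congrArg ψ hxy
    rwa [hinj, hinj] at h3
  · exact hsurj
end

section
/- Let A be a finitely generated supercommutative superalgebra over a field, V a finitely generated A-supermodule, and I a superideal of A. Then ⋂_{t≥0} Iᵗ V = { v ∈ V : ∃ x ∈ I₀, (1 − x)v = 0 } (super Krull intersection theorem). -/
set_option linter.unusedSectionVars false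
set_option maxHeartbeats 2000000

section Super
variable {K A : Type} [Field K] [Ring A] [Algebra K A]
variable (𝒜 : ZMod 2 → Submodule K A) [GradedAlgebra 𝒜]

theorem skit_even_comm
    (hcomm : ∀ (i j : ZMod 2) (a b : A), a ∈ 𝒜 i → b ∈ 𝒜 j →
      a * b = ((-1 : K) ^ (i.val * j.val)) • (b * a))
    {r : A} (hr : r ∈ 𝒜 0) (a : A) : r * a = a * r := by
  induction a using DirectSum.Decomposition.inductionOn 𝒜 with
  | zero => simp
  | @homogeneous j b =>
    have := hcomm 0 j r b hr b.2
    simpa using this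
  | add x y hx hy => rw [mul_add, add_mul, hx, hy]

theorem skit_odd_sq (hK : (2 : K) ≠ 0)
    (hcomm : ∀ (i j : ZMod 2) (a b : A), a ∈ 𝒜 i → b ∈ 𝒜 j →
      a * b = ((-1 : K) ^ (i.val * j.val)) • (b * a))
    {x : A} (hx : x ∈ 𝒜 1) : x * x = 0 := by
  have h := hcomm 1 1 x x hx hx
  have h1 : ((1 : ZMod 2)).val = 1 := rfl
  rw [h1] at h
  simp only [mul_one, pow_one] at h
  have h2 : (2 : K) • (x * x) = 0 := by
    rw [two_smul]
    nth_rewrite 1 [h]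
    simp
  calc x * x = ((2:K)⁻¹ * 2) • (x * x) := by rw [inv_mul_cancel₀ hK, one_smul]
  _ = (2:K)⁻¹ • ((2:K) • (x*x)) := by rw [mul_smul]
  _ = 0 := by rw [h2, smul_zero]

theorem skit_odd_list_comm
    (hcomm : ∀ (i j : ZMod 2) (a b : A), a ∈ 𝒜 i → b ∈ 𝒜 j →
      a * b = ((-1 : K) ^ (i.val * j.val)) • (b * a))
    {x : A} (hx : x ∈ 𝒜 1) (l : List A) (hl : ∀ y ∈ l, y ∈ 𝒜 1) :
    x * l.prod = ((-1 : K) ^ l.length) • (l.prod * x) := by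
  induction l with
  | nil => simp
  | cons y t ih =>
    have hy : y ∈ 𝒜 1 := hl y (by simp)
    have ht : ∀ z ∈ t, z ∈ 𝒜 1 := fun z hz => hl z (by simp [hz])
    have hxy := hcomm 1 1 x y hx hy
    have h1 : ((1 : ZMod 2)).val = 1 := rfl
    rw [h1] at hxy
    simp only [mul_one, pow_one] at hxy
    rw [List.prod_cons, ← mul_assoc, hxy, smul_mul_assoc, mul_assoc, ih ht,
      List.length_cons, mul_smul_comm, ← mul_assoc, pow_succ, smul_smul, mul_comm]

theorem skit_dup_prod_zero (hK : (2 : K) ≠ 0)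
    (hcomm : ∀ (i j : ZMod 2) (a b : A), a ∈ 𝒜 i → b ∈ 𝒜 j →
      a * b = ((-1 : K) ^ (i.val * j.val)) • (b * a))
    (l : List A) (hl : ∀ y ∈ l, y ∈ 𝒜 1) (hnd : ¬ l.Nodup) : l.prod = 0 := by
  induction l with
  | nil => simp at hnd
  | cons x t ih =>
    have hx : x ∈ 𝒜 1 := hl x (by simp)
    have ht : ∀ z ∈ t, z ∈ 𝒜 1 := fun z hz => hl z (by simp [hz])
    rw [List.nodup_cons] at hnd
    push_neg at hnd
    by_cases hdt : t.Nodup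
    · have hxt : x ∈ t := by
        by_contra hxn
        exact (hnd (by simpa using hxn)).elim hdt
      obtain ⟨u, w, rfl⟩ := List.append_of_mem hxt
      have hu : ∀ z ∈ u, z ∈ 𝒜 1 := fun z hz => ht z (by simp [hz])
      rw [List.prod_cons, List.prod_append, List.prod_cons, ← mul_assoc,
        skit_odd_list_comm 𝒜 hcomm hx u hu]
      rw [smul_mul_assoc, mul_assoc, ← mul_assoc x x, skit_odd_sq 𝒜 hK hcomm hx]
      simp
    · rw [List.prod_cons, ih ht hdt, mul_zero]

/-- The generating set: products of duplicate-free lists of odd elements of `s`. -/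
def skitG (s : Finset A) : Set A :=
  {a | ∃ l : List A, l.Nodup ∧ (∀ y ∈ l, y ∈ s ∧ y ∈ 𝒜 1) ∧ a = l.prod}

theorem skit_G_finite (s : Finset A) : (skitG 𝒜 s).Finite := by
  classical
  apply Set.Finite.subset
    (((s.toList.sublists.flatMap List.permutations).map List.prod).toFinset : Finset A).finite_toSet
  rintro a ⟨l, nd, hmem, rfl⟩
  simp only [Finset.coe_sort_coe, Finset.mem_coe, List.mem_toFinset, List.mem_map,
    List.mem_flatMap, List.mem_sublists, List.mem_permutations]
  have hsub : l ⊆ s.toList := fun x hx => Finset.mem_toList.mpr (hmem x hx).1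
  obtain ⟨m, hperm, hm⟩ := nd.subperm hsub
  exact ⟨l, ⟨m, hm, hperm.symm⟩, rfl⟩

theorem skit_span_top (hK : (2 : K) ≠ 0)
    (hcomm : ∀ (i j : ZMod 2) (a b : A), a ∈ 𝒜 i → b ∈ 𝒜 j →
      a * b = ((-1 : K) ^ (i.val * j.val)) • (b * a))
    (S : Subalgebra K A) (hS : ∀ r ∈ S, r ∈ 𝒜 0)
    (s : Finset A) (hgen : Algebra.adjoin K (s : Set A) = ⊤)
    (hs : ∀ x ∈ s, x ∈ S ∨ x ∈ 𝒜 1) :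
    Submodule.span ↥S (skitG 𝒜 s) = ⊤ := by
  classical
  set P := Submodule.span ↥S (skitG 𝒜 s) with hP
  have h1 : (1 : A) ∈ P := Submodule.subset_span ⟨[], by simp, by simp, by simp⟩
  have hsmulK : ∀ (k : K) (p : A), p ∈ P → k • p ∈ P := by
    intro k p hp
    have : k • p = ((algebraMap K ↥S k : ↥S)) • p := by
      rw [Subalgebra.smul_def, Subalgebra.coe_algebraMap, smul_eq_mul, ← Algebra.smul_def]
    rw [this]
    exact P.smul_mem _ hp
  have key : ∀ a : A, ∀ p ∈ P, a * p ∈ P := by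
    intro a
    have ha : a ∈ Algebra.adjoin K (s : Set A) := hgen ▸ Algebra.mem_top
    induction ha using Algebra.adjoin_induction with
    | mem x hx =>
      rcases hs x hx with hxS | hx1
      · intro p hp
        have hxp : x * p = (⟨x, hxS⟩ : ↥S) • p := rfl
        rw [hxp]
        exact P.smul_mem _ hp
      · intro p hp
        induction hp using Submodule.span_induction with
        | mem g hg =>
          obtain ⟨l, nd, hmem, rfl⟩ := hg
          by_cases hxl : x ∈ l
          · have hnd : ¬ (x :: l).Nodup := by
              rw [List.nodup_cons]; tauto
            have hz := skit_dup_prod_zero 𝒜 hK hcomm (x :: l)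
              (by intro y hy
                  rcases List.mem_cons.mp hy with h | h
                  · exact h ▸ hx1
                  · exact (hmem y h).2) hnd
            rw [List.prod_cons] at hz
            rw [hz]
            exact P.zero_mem
          · refine Submodule.subset_span ⟨x :: l, List.nodup_cons.mpr ⟨hxl, nd⟩, ?_, (List.prod_cons).symm⟩
            intro y hy
            rcases List.mem_cons.mp hy with h | h
            · exact h ▸ ⟨hx, hx1⟩
            · exact hmem y h
        | zero => rw [mul_zero]; exact P.zero_mem
        | add p q hp hq ihp ihq => rw [mul_add]; exact P.add_mem ihp ihq
        | smul r p hp ihp =>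
          have hr : (r : A) ∈ 𝒜 0 := hS r r.2
          have : x * (r • p) = r • (x * p) := by
            rw [Subalgebra.smul_def, Subalgebra.smul_def, smul_eq_mul, smul_eq_mul,
              ← mul_assoc, ← skit_even_comm 𝒜 hcomm hr x, mul_assoc]
          rw [this]
          exact P.smul_mem r ihp
    | algebraMap k =>
      intro p hp
      rw [← Algebra.smul_def]
      exact hsmulK k p hp
    | add a b ha hb iha ihb =>
      intro p hp
      rw [add_mul]
      exact P.add_mem (iha p hp) (ihb p hp)
    | mul a b ha hb iha ihb =>
      intro p hp
      rw [mul_assoc]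
      exact iha _ (ihb p hp)
  rw [eq_top_iff]
  intro a _
  simpa using key a 1 h1


theorem skit_proj_mem (i : ZMod 2) (a : A) : GradedAlgebra.proj 𝒜 i a ∈ 𝒜 i := by
  rw [GradedAlgebra.proj_apply]
  exact SetLike.coe_mem _

theorem skit_decomp (a : A) :
    GradedAlgebra.proj 𝒜 0 a + GradedAlgebra.proj 𝒜 1 a = a := by
  have hcase : ∀ i : ZMod 2, i = 0 ∨ i = 1 := by decide
  induction a using DirectSum.Decomposition.inductionOn 𝒜 with
  | zero => simp
  | @homogeneous j b =>
    rcases hcase j with rfl | rfl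
    · rw [GradedAlgebra.proj_apply, GradedAlgebra.proj_apply,
        DirectSum.decompose_of_mem_same 𝒜 b.2,
        DirectSum.decompose_of_mem_ne 𝒜 b.2 (by decide : (0 : ZMod 2) ≠ 1)]
      simp
    · rw [GradedAlgebra.proj_apply, GradedAlgebra.proj_apply,
        DirectSum.decompose_of_mem_same 𝒜 b.2,
        DirectSum.decompose_of_mem_ne 𝒜 b.2 (by decide : (1 : ZMod 2) ≠ 0)]
      simp
  | add x y hx hy =>
    rw [map_add, map_add]
    rw [show GradedAlgebra.proj 𝒜 0 x + GradedAlgebra.proj 𝒜 0 y +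
      (GradedAlgebra.proj 𝒜 1 x + GradedAlgebra.proj 𝒜 1 y) =
      (GradedAlgebra.proj 𝒜 0 x + GradedAlgebra.proj 𝒜 1 x) +
      (GradedAlgebra.proj 𝒜 0 y + GradedAlgebra.proj 𝒜 1 y) by abel, hx, hy]

end Super

theorem skit_easy {K A : Type} [Field K] [Ring A] [Algebra K A]
    {V : Type} [AddCommGroup V] [Module K V] [Module A V] [IsScalarTower K A V]
    (I : Submodule K A) {v : V} {x : A} (hxI : x ∈ I) (hxv : (1 - x) • v = 0) (t : ℕ) :
    v ∈ Submodule.span K {y : V | ∃ a ∈ (I ^ t : Submodule K A), ∃ w : V, y = a • w} := by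
  have hv : v = x • v := by
    have := hxv
    rw [sub_smul, one_smul, sub_eq_zero] at this
    exact this
  have hxt : ∀ n : ℕ, x ^ n • v = v := by
    intro n
    induction n with
    | zero => simp
    | succ n ih => rw [pow_succ, mul_smul, ← hv, ih]
  refine Submodule.subset_span ⟨x ^ t, Submodule.pow_mem_pow I hxI t, v, ?_⟩
  rw [hxt t]

/-- super Krull intersection theorem: for a finitely generated
supercommutative superalgebra A, a finitely generated A-supermodule V and a superideal I,
⋂ₜ IᵗV = { v ∈ V : ∃ x ∈ I₀, (1 − x)v = 0 }. -/
theorem super_krull_intersection {K A : Type} [Field K] (hK : (2 : K) ≠ 0)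
    [Ring A] [Algebra K A] (𝒜 : ZMod 2 → Submodule K A) [GradedAlgebra 𝒜]
    (hcomm : ∀ (i j : ZMod 2) (a b : A), a ∈ 𝒜 i → b ∈ 𝒜 j →
      a * b = ((-1 : K) ^ (i.val * j.val)) • (b * a))
    (hfg : ∃ s : Finset A, Algebra.adjoin K (s : Set A) = ⊤)
    {V : Type} [AddCommGroup V] [Module K V] [Module A V] [IsScalarTower K A V]
    [Module.Finite A V]
    (𝒱 : ZMod 2 → Submodule K V) [DirectSum.Decomposition 𝒱]
    (hVgr : ∀ (i j : ZMod 2) (a : A) (v : V), a ∈ 𝒜 i → v ∈ 𝒱 j → a • v ∈ 𝒱 (i + j))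
    (I : Submodule K A)
    (hIl : ∀ a : A, ∀ x ∈ I, a * x ∈ I) (hIr : ∀ a : A, ∀ x ∈ I, x * a ∈ I)
    (hIhom : ∀ x ∈ I, ∀ i : ZMod 2, GradedAlgebra.proj 𝒜 i x ∈ I) :
    ((⨅ t : ℕ, Submodule.span K
        {y : V | ∃ a ∈ (I ^ t : Submodule K A), ∃ v : V, y = a • v}) : Set V)
      = {v : V | ∃ x : A, x ∈ I ∧ x ∈ 𝒜 0 ∧ (1 - x) • v = 0} := by
  classical
  ext v
  simp only [Set.iInf_eq_iInter, Set.mem_iInter, SetLike.mem_coe, Set.mem_setOf_eq]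
  constructor
  · intro hv
    -- ============ hard direction ============
    obtain ⟨s, hgen⟩ := hfg
    set s0 : Finset A := s.image (fun a => GradedAlgebra.proj 𝒜 0 a) with hs0def
    set s1 : Finset A := s.image (fun a => GradedAlgebra.proj 𝒜 1 a) with hs1def
    set s' : Finset A := s0 ∪ s1 with hs'def
    have hs0 : ∀ x ∈ s0, x ∈ 𝒜 0 := by
      intro x hx
      obtain ⟨a, -, rfl⟩ := Finset.mem_image.mp hx
      exact skit_proj_mem 𝒜 0 a
    have hs1 : ∀ x ∈ s1, x ∈ 𝒜 1 := by
      intro x hx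
      obtain ⟨a, -, rfl⟩ := Finset.mem_image.mp hx
      exact skit_proj_mem 𝒜 1 a
    have hgen' : Algebra.adjoin K ((s' : Set A)) = ⊤ := by
      rw [eq_top_iff, ← hgen]
      apply Algebra.adjoin_le
      intro a ha
      rw [← skit_decomp 𝒜 a]
      refine add_mem (Algebra.subset_adjoin ?_) (Algebra.subset_adjoin ?_)
      · exact Finset.mem_coe.mpr (Finset.mem_union_left _
          (Finset.mem_image.mpr ⟨a, ha, rfl⟩))
      · exact Finset.mem_coe.mpr (Finset.mem_union_right _
          (Finset.mem_image.mpr ⟨a, ha, rfl⟩))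
    set R0 : Subalgebra K A := Algebra.adjoin K (s0 : Set A) with hR0def
    have hR0even : ∀ r ∈ R0, r ∈ 𝒜 0 := by
      intro r hr
      induction hr using Algebra.adjoin_induction with
      | mem x hx => exact hs0 x hx
      | algebraMap k => exact SetLike.algebraMap_mem_graded 𝒜 k
      | add x y hx hy ihx ihy => exact add_mem ihx ihy
      | mul x y hx hy ihx ihy => simpa using SetLike.mul_mem_graded ihx ihy
    have heven_comm : ∀ {r : A}, r ∈ 𝒜 0 → ∀ a : A, r * a = a * r :=
      fun {r} hr a => skit_even_comm 𝒜 hcomm hr a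
    have hs' : ∀ x ∈ s', x ∈ R0 ∨ x ∈ 𝒜 1 := by
      intro x hx
      rcases Finset.mem_union.mp hx with h | h
      · exact Or.inl (Algebra.subset_adjoin h)
      · exact Or.inr (hs1 x h)
    set Rev : Subalgebra K A := SetLike.GradeZero.subalgebra 𝒜 with hRevdef
    have hRevEven : ∀ r ∈ Rev, r ∈ 𝒜 0 := fun r h => h
    have hEvenRev : ∀ {r : A}, r ∈ 𝒜 0 → r ∈ Rev := fun h => h
    have hs'' : ∀ x ∈ s', x ∈ Rev ∨ x ∈ 𝒜 1 := by
      intro x hx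
      rcases hs' x hx with h | h
      · exact Or.inl (hEvenRev (hR0even x h))
      · exact Or.inr h
    letI cR0 : CommRing ↥R0 :=
      { (inferInstance : Ring ↥R0) with
        mul_comm := fun a b => Subtype.ext (heven_comm (hR0even _ a.2) (b : A)) }
    letI cRev : CommRing ↥Rev :=
      { (inferInstance : Ring ↥Rev) with
        mul_comm := fun a b => Subtype.ext (heven_comm (hRevEven _ a.2) (b : A)) }
    letI : Algebra.FiniteType K ↥R0 := ⟨(Subalgebra.fg_top R0).mpr ⟨s0, rfl⟩⟩
    letI : IsNoetherianRing ↥R0 := Algebra.FiniteType.isNoetherianRing K ↥R0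
    have hspanR0 : Submodule.span ↥R0 (skitG 𝒜 s') = ⊤ :=
      skit_span_top 𝒜 hK hcomm R0 hR0even s' hgen' hs'
    haveI hNoethA : IsNoetherian ↥R0 A :=
      isNoetherian_top_iff.mp (isNoetherian_of_fg_of_noetherian ⊤
        ⟨(skit_G_finite 𝒜 s').toFinset, by
          rw [Set.Finite.coe_toFinset]; exact hspanR0⟩)
    letI modR0Rev : Module ↥R0 ↥Rev :=
      { smul := fun r x => ⟨(r : A) * (x : A),
          hEvenRev (by simpa using SetLike.mul_mem_graded (hR0even _ r.2) (hRevEven _ x.2))⟩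
        one_smul := fun x => Subtype.ext (one_mul _)
        mul_smul := fun r s x => Subtype.ext (mul_assoc _ _ _)
        smul_zero := fun r => Subtype.ext (mul_zero _)
        smul_add := fun r x y => Subtype.ext (mul_add _ _ _)
        add_smul := fun r s x => Subtype.ext (add_mul _ _ _)
        zero_smul := fun x => Subtype.ext (zero_mul _) }
    letI towerR0Rev : IsScalarTower ↥R0 ↥Rev ↥Rev :=
      ⟨fun r x y => Subtype.ext (mul_assoc (r : A) (x : A) (y : A))⟩
    haveI hNoethRev : IsNoetherian ↥R0 ↥Rev :=
      isNoetherian_of_injective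
        ({ toFun := Subtype.val
           map_add' := fun _ _ => rfl
           map_smul' := fun _ _ => rfl } : ↥Rev →ₗ[↥R0] A) Subtype.val_injective
    letI : IsNoetherianRing ↥Rev := isNoetherianRing_iff.mpr (isNoetherian_of_tower ↥R0 hNoethRev)
    -- V is a finite module over Rev
    have hspanRev : Submodule.span ↥Rev (skitG 𝒜 s') = ⊤ :=
      skit_span_top 𝒜 hK hcomm Rev hRevEven s' hgen' hs''
    obtain ⟨W, hW⟩ := Module.Finite.fg_top (R := A) (M := V)
    set GF : Finset A := (skit_G_finite 𝒜 s').toFinset with hGFdef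
    set GW : Finset V := (GF ×ˢ W).image (fun p => p.1 • p.2) with hGWdef
    set Q : Submodule ↥Rev V := Submodule.span ↥Rev (GW : Set V) with hQdef
    have hQg : ∀ g ∈ skitG 𝒜 s', ∀ w ∈ W, g • w ∈ Q := by
      intro g hg w hw
      exact Submodule.subset_span (Finset.mem_coe.mpr (Finset.mem_image.mpr
        ⟨(g, w), Finset.mem_product.mpr ⟨(skit_G_finite 𝒜 s').mem_toFinset.mpr hg, hw⟩, rfl⟩))
    have haux : ∀ (a : A), ∀ w ∈ W, a • w ∈ Q := by
      intro a w hw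
      have ha : a ∈ Submodule.span ↥Rev (skitG 𝒜 s') := by rw [hspanRev]; trivial
      induction ha using Submodule.span_induction with
      | mem g hg => exact hQg g hg w hw
      | zero => rw [zero_smul]; exact Q.zero_mem
      | add x y hx hy ihx ihy => rw [add_smul]; exact Q.add_mem ihx ihy
      | smul r x hx ih =>
        have : (r • x) • w = r • (x • w) := by
          rw [Subalgebra.smul_def, smul_eq_mul, mul_smul, Subalgebra.smul_def]
        rw [this]
        exact Q.smul_mem r ih
    have hQact : ∀ (a : A), ∀ u ∈ Q, a • u ∈ Q := by
      intro a u hu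
      induction hu using Submodule.span_induction with
      | mem y hy =>
        obtain ⟨p, hp, rfl⟩ := Finset.mem_image.mp (Finset.mem_coe.mp hy)
        obtain ⟨hp1, hp2⟩ := Finset.mem_product.mp hp
        rw [← mul_smul]
        exact haux (a * p.1) p.2 hp2
      | zero => rw [smul_zero]; exact Q.zero_mem
      | add x y hx hy ihx ihy => rw [smul_add]; exact Q.add_mem ihx ihy
      | smul r x hx ih =>
        have hrc : (r : A) * a = a * (r : A) := heven_comm (hRevEven _ r.2) a
        have : a • (r • x) = r • (a • x) := by
          rw [Subalgebra.smul_def, Subalgebra.smul_def, ← mul_smul, ← hrc, mul_smul]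
        rw [this]
        exact Q.smul_mem r ih
    have hQall : ∀ u : V, u ∈ Q := by
      intro u
      have hu : u ∈ Submodule.span A (W : Set V) := by rw [hW]; trivial
      induction hu using Submodule.span_induction with
      | mem w hw => rw [← one_smul A w]; exact haux 1 w hw
      | zero => exact Q.zero_mem
      | add x y hx hy ihx ihy => exact Q.add_mem ihx ihy
      | smul a x hx ih => exact hQact a x ih
    have hQtop : Q = ⊤ := eq_top_iff.mpr fun u _ => hQall u
    letI : Module.Finite ↥Rev V := ⟨⟨GW, hQtop⟩⟩
    -- the even part of the ideal
    set I0 : Ideal ↥Rev :=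
      { carrier := {x : ↥Rev | (x : A) ∈ I}
        add_mem' := fun {x y} hx hy => by
          simpa using I.add_mem hx hy
        zero_mem' := by simpa using I.zero_mem
        smul_mem' := fun c {x} hx => by
          simpa [smul_eq_mul] using hIl (c : A) _ hx } with hI0def
    have hmemI0 : ∀ (x : ↥Rev), (x : A) ∈ I → x ∈ I0 := fun x hx => hx
    -- the A-action preserves I0 ^ t • ⊤
    have hstep : ∀ (t : ℕ) (y : A), ∀ u ∈ (I0 ^ t • ⊤ : Submodule ↥Rev V),
        y • u ∈ (I0 ^ t • ⊤ : Submodule ↥Rev V) := by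
      intro t y u hu
      refine Submodule.smul_induction_on hu ?_ ?_
      · intro r hr n hn
        have : y • (r • n) = r • (y • n) := by
          rw [Subalgebra.smul_def, Subalgebra.smul_def, ← mul_smul,
            ← heven_comm (hRevEven _ r.2) y, mul_smul]
        rw [this]
        exact Submodule.smul_mem_smul hr trivial
      · intro z w hz hw
        rw [smul_add]
        exact Submodule.add_mem _ hz hw
    have hconv : ∀ t : ℕ, (I0 ^ (t + 1) • ⊤ : Submodule ↥Rev V) = I0 • (I0 ^ t • ⊤) := by
      intro t
      rw [pow_succ', ← smul_eq_mul, Submodule.smul_assoc]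
    have hcore : ∀ x ∈ I, ∀ y ∈ I, ∀ (t : ℕ), ∀ u ∈ (I0 ^ t • ⊤ : Submodule ↥Rev V),
        x • (y • u) ∈ (I0 ^ (t + 1) • ⊤ : Submodule ↥Rev V) := by
      intro x hx y hy t u hu
      rw [hconv t]
      have hx0 : GradedAlgebra.proj 𝒜 0 x ∈ I := hIhom x hx 0
      have hx1 : GradedAlgebra.proj 𝒜 1 x ∈ I := hIhom x hx 1
      have hy0 : GradedAlgebra.proj 𝒜 0 y ∈ I := hIhom y hy 0
      have hy1 : GradedAlgebra.proj 𝒜 1 y ∈ I := hIhom y hy 1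
      set x0 := GradedAlgebra.proj 𝒜 0 x
      set x1 := GradedAlgebra.proj 𝒜 1 x
      set y0 := GradedAlgebra.proj 𝒜 0 y
      set y1 := GradedAlgebra.proj 𝒜 1 y
      have hx0m : x0 ∈ 𝒜 0 := skit_proj_mem 𝒜 0 x
      have hx1m : x1 ∈ 𝒜 1 := skit_proj_mem 𝒜 1 x
      have hy0m : y0 ∈ 𝒜 0 := skit_proj_mem 𝒜 0 y
      have hy1m : y1 ∈ 𝒜 1 := skit_proj_mem 𝒜 1 y
      have hxs : x = x0 + x1 := (skit_decomp 𝒜 x).symm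
      have hys : y = y0 + y1 := (skit_decomp 𝒜 y).symm
      rw [hxs, hys]
      simp only [add_smul, smul_add]
      have T0 : ∀ z : A, ∀ w ∈ (I0 ^ t • ⊤ : Submodule ↥Rev V), z ∈ I → z ∈ 𝒜 0 →
          z • w ∈ I0 • (I0 ^ t • ⊤ : Submodule ↥Rev V) := by
        intro z w hw hzI hz0
        have : z • w = (⟨z, hEvenRev hz0⟩ : ↥Rev) • w := rfl
        rw [this]
        exact Submodule.smul_mem_smul (hmemI0 _ hzI) hw
      refine Submodule.add_mem _ (Submodule.add_mem _ ?_ ?_) (Submodule.add_mem _ ?_ ?_)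
      · -- x0 • (y0 • u)
        exact T0 x0 (y0 • u) (hstep t y0 u hu) hx0 hx0m
      · -- x1 • (y0 • u)
        have : x1 • (y0 • u) = y0 • (x1 • u) := by
          rw [← mul_smul, ← heven_comm hy0m x1, mul_smul]
        rw [this]
        exact T0 y0 (x1 • u) (hstep t x1 u hu) hy0 hy0m
      · -- x0 • (y1 • u)
        exact T0 x0 (y1 • u) (hstep t y1 u hu) hx0 hx0m
      · -- x1 • (y1 • u)
        have hprod : x1 * y1 ∈ 𝒜 0 := by
          have := SetLike.mul_mem_graded hx1m hy1m
          rwa [show (1 : ZMod 2) + 1 = 0 by decide] at this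
        have : x1 • (y1 • u) = (x1 * y1) • u := (mul_smul x1 y1 u).symm
        rw [this]
        exact T0 (x1 * y1) u hu (hIr y1 x1 hx1) hprod
    have hmain : ∀ (t : ℕ), ∀ a ∈ (I ^ (2 * t) : Submodule K A), ∀ w : V,
        a • w ∈ (I0 ^ t • ⊤ : Submodule ↥Rev V) := by
      intro t
      induction t with
      | zero =>
        intro a ha w
        rw [pow_zero, Ideal.one_eq_top, Submodule.top_smul]
        trivial
      | succ t ih =>
        intro a ha w
        rw [show 2 * (t + 1) = (2 * t) + 1 + 1 by ring, pow_succ', pow_succ'] at ha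
        revert w
        refine Submodule.mul_induction_on ha ?_ ?_
        · intro m hm z hz
          revert z
          refine fun z hz => Submodule.mul_induction_on hz ?_ ?_
          · intro y hy d hd w
            rw [show (m * (y * d)) • w = m • (y • (d • w)) by rw [mul_smul, mul_smul]]
            exact hcore m hm y hy t (d • w) (ih d hd w)
          · intro z1 z2 h1 h2 w
            rw [mul_add, add_smul]
            exact Submodule.add_mem _ (h1 w) (h2 w)
        · intro b c hb hc w
          rw [add_smul]
          exact Submodule.add_mem _ (hb w) (hc w)
    have hvN : v ∈ (⨅ t : ℕ, (I0 ^ t • ⊤ : Submodule ↥Rev V)) := by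
      rw [Submodule.mem_iInf]
      intro t
      have h2t := hv (2 * t)
      have hle : Submodule.span K {y : V | ∃ a ∈ (I ^ (2 * t) : Submodule K A), ∃ w : V, y = a • w}
          ≤ Submodule.restrictScalars K (I0 ^ t • ⊤ : Submodule ↥Rev V) := by
        rw [Submodule.span_le]
        rintro y ⟨a, ha, w, rfl⟩
        exact hmain t a ha w
      exact hle h2t
    obtain ⟨r, hr⟩ := (Ideal.mem_iInf_smul_pow_eq_bot_iff I0 v).mp hvN
    refine ⟨((r : ↥Rev) : A), r.2, hRevEven _ (r : ↥Rev).2, ?_⟩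
    rw [sub_smul, one_smul]
    rw [show ((r : ↥Rev) : A) • v = (r : ↥Rev) • v from rfl, hr]
    exact sub_self v
  · rintro ⟨x, hxI, -, hxv⟩ t
    exact skit_easy I hxI hxv t
end

section
/- Let R be a supercommutative superalgebra over a field of characteristic 0 with R₀ = K·1 and R₁² = 0 (so R = K ⊕ R₁ with R₁ an odd square-zero ideal). Then every flat R-supermodule is flat as an R-module: any short exact sequence of (ungraded) R-modules 0 → V → W → U → 0 is isomorphic to a short exact sequence of R-supermodules, by setting V₁ = V ∩ R₁W and choosing complements compatibly. -/
/-- Wrapper for `N × N` so that we can install a *twisted* `R`-module structure without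
clashing with the product instance. -/
def TwistPair (N : Type) : Type := N × N

instance (N : Type) [AddCommGroup N] : AddCommGroup (TwistPair N) :=
  inferInstanceAs (AddCommGroup (N × N))

/-- The twisted `R`-module structure on `N × N`: the "even part" of `r` acts diagonally,
the "odd part" swaps the factors. Here `P₁` is the projection onto the odd part. -/
def twistModule {R : Type} [CommRing R] (P₁ : R →+ R) (hone : P₁ 1 = 0)
    (hmul : ∀ r s : R, P₁ (r * s) = (r - P₁ r) * P₁ s + P₁ r * (s - P₁ s))
    (hmul₀ : ∀ r s : R, r * s - P₁ (r * s) = (r - P₁ r) * (s - P₁ s))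
    (hzero : ∀ r s : R, P₁ r * P₁ s = 0)
    (N : Type) [AddCommGroup N] [Module R N] : Module R (TwistPair N) where
  smul r x := (((r - P₁ r) • x.1 + P₁ r • x.2 : N), ((P₁ r • x.1 + (r - P₁ r) • x.2 : N)))
  one_smul x := by
    show ((1 - P₁ 1) • x.1 + P₁ 1 • x.2, P₁ 1 • x.1 + (1 - P₁ 1) • x.2) = x
    rw [hone]; simp; rfl
  mul_smul r s x := by
    show ((r*s - P₁ (r*s)) • x.1 + P₁ (r*s) • x.2, P₁ (r*s) • x.1 + (r*s - P₁ (r*s)) • x.2)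
      = ((r - P₁ r) • ((s - P₁ s) • x.1 + P₁ s • x.2) + P₁ r • (P₁ s • x.1 + (s - P₁ s) • x.2),
         P₁ r • ((s - P₁ s) • x.1 + P₁ s • x.2) + (r - P₁ r) • (P₁ s • x.1 + (s - P₁ s) • x.2))
    rw [hmul₀ r s, hmul r s]
    refine Prod.ext ?_ ?_ <;>
    · simp only [smul_add, smul_smul, add_smul, hzero, zero_smul, zero_add, add_zero]
      abel
  smul_zero r := by
    show ((r - P₁ r) • (0:N) + P₁ r • (0:N), P₁ r • (0:N) + (r - P₁ r) • (0:N)) = 0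
    simp
  smul_add r x y := by
    show ((r - P₁ r) • (x.1 + y.1) + P₁ r • (x.2 + y.2),
          P₁ r • (x.1 + y.1) + (r - P₁ r) • (x.2 + y.2))
      = (((r - P₁ r) • x.1 + P₁ r • x.2) + ((r - P₁ r) • y.1 + P₁ r • y.2),
         (P₁ r • x.1 + (r - P₁ r) • x.2) + (P₁ r • y.1 + (r - P₁ r) • y.2))
    refine Prod.ext ?_ ?_ <;>
    · simp only [smul_add]
      abel
  add_smul r s x := by
    show ((r + s - P₁ (r+s)) • x.1 + P₁ (r+s) • x.2, P₁ (r+s) • x.1 + (r + s - P₁ (r+s)) • x.2)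
      = (((r - P₁ r) • x.1 + P₁ r • x.2) + ((s - P₁ s) • x.1 + P₁ s • x.2),
         (P₁ r • x.1 + (r - P₁ r) • x.2) + (P₁ s • x.1 + (s - P₁ s) • x.2))
    refine Prod.ext ?_ ?_ <;>
    · simp only [map_add, sub_smul, add_smul]
      abel
  zero_smul x := by
    show ((0 - P₁ 0) • x.1 + P₁ 0 • x.2, P₁ 0 • x.1 + (0 - P₁ 0) • x.2) = 0
    simp

/-- let R = K ⊕ R₁ be a supercommutative superalgebra over a field of
characteristic 0 with even part K·1 and odd square-zero part R₁. Then every flat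
R-supermodule (a graded module such that tensoring is exact on graded injections) is flat
as an ordinary R-module. -/
theorem flat_supermodule_is_flat {K R : Type} [Field K] [CharZero K]
    [CommRing R] [Algebra K R]
    (R₁ : Submodule K R)
    (hsq : ∀ x ∈ R₁, ∀ y ∈ R₁, x * y = 0)
    (hcompl : IsCompl (LinearMap.range (Algebra.linearMap K R)) R₁)
    (M : Type) [AddCommGroup M] [Module K M] [Module R M] [IsScalarTower K R M]
    (M₀ M₁ : Submodule K M) (hM : IsCompl M₀ M₁)
    (hM₀ : ∀ r ∈ R₁, ∀ m ∈ M₀, r • m ∈ M₁) (hM₁ : ∀ r ∈ R₁, ∀ m ∈ M₁, r • m ∈ M₀)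
    (hsflat : ∀ (V : Type) [AddCommGroup V] [Module K V] [Module R V] [IsScalarTower K R V]
      (W : Type) [AddCommGroup W] [Module K W] [Module R W] [IsScalarTower K R W]
      (V₀ V₁ : Submodule K V) (W₀ W₁ : Submodule K W),
      IsCompl V₀ V₁ → IsCompl W₀ W₁ →
      (∀ r ∈ R₁, ∀ v ∈ V₀, r • v ∈ V₁) → (∀ r ∈ R₁, ∀ v ∈ V₁, r • v ∈ V₀) →
      (∀ r ∈ R₁, ∀ w ∈ W₀, r • w ∈ W₁) → (∀ r ∈ R₁, ∀ w ∈ W₁, r • w ∈ W₀) →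
      ∀ f : V →ₗ[R] W, (∀ v ∈ V₀, f v ∈ W₀) → (∀ v ∈ V₁, f v ∈ W₁) →
        Function.Injective f → Function.Injective (LinearMap.lTensor M f)) :
    Module.Flat R M := by
  classical
  -- projections onto the odd and even parts of R
  set R₀ : Submodule K R := LinearMap.range (Algebra.linearMap K R) with hR₀
  set P₁ : R →ₗ[K] R := R₁.subtype ∘ₗ (R₁.projectionOnto R₀ hcompl.symm) with hP₁def
  have hP₁mem : ∀ r : R, P₁ r ∈ R₁ := fun r => (R₁.projectionOnto R₀ hcompl.symm r).2
  have hP₁odd : ∀ x ∈ R₁, P₁ x = x := by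
    intro x hx
    show ((R₁.projectionOnto R₀ hcompl.symm x : R)) = x
    rw [Submodule.projectionOnto_apply_of_mem_left hcompl.symm hx]
  have hP₁even : ∀ x ∈ R₀, P₁ x = 0 := by
    intro x hx
    show ((R₁.projectionOnto R₀ hcompl.symm x : R)) = 0
    rw [Submodule.projectionOnto_apply_of_mem_right hcompl.symm hx]; rfl
  have hP₀mem : ∀ r : R, r - P₁ r ∈ R₀ := by
    intro r
    obtain ⟨a, b, ha, hb, rfl⟩ := Submodule.codisjoint_iff_exists_add_eq.mp hcompl.codisjoint r
    have hb' : P₁ (a + b) = b := by rw [map_add, hP₁odd b hb, hP₁even a ha, zero_add]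
    rw [hb']; simpa using ha
  have hone : P₁ (1 : R) = 0 := hP₁even 1 ⟨1, by simp⟩
  have hR₀mul : ∀ x ∈ R₀, ∀ y ∈ R₀, x * y ∈ R₀ := by
    rintro x ⟨k, rfl⟩ y ⟨l, rfl⟩
    exact ⟨k * l, by simp [Algebra.linearMap_apply, map_mul]⟩
  have hR₀R₁ : ∀ x ∈ R₀, ∀ y ∈ R₁, x * y ∈ R₁ := by
    rintro x ⟨k, rfl⟩ y hy
    simpa [Algebra.linearMap_apply, Algebra.smul_def] using R₁.smul_mem k hy
  have hzero : ∀ r s : R, P₁ r * P₁ s = 0 := fun r s => hsq _ (hP₁mem r) _ (hP₁mem s)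
  have hmul : ∀ r s : R,
      P₁ (r * s) = (r - P₁ r) * P₁ s + P₁ r * (s - P₁ s) := by
    intro r s
    have hexp : r * s = (r - P₁ r) * (s - P₁ s) +
        ((r - P₁ r) * P₁ s + P₁ r * (s - P₁ s)) + P₁ r * P₁ s := by ring
    have h1 : P₁ ((r - P₁ r) * (s - P₁ s)) = 0 :=
      hP₁even _ (hR₀mul _ (hP₀mem r) _ (hP₀mem s))
    have h2 : P₁ ((r - P₁ r) * P₁ s + P₁ r * (s - P₁ s)) =
        (r - P₁ r) * P₁ s + P₁ r * (s - P₁ s) := by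
      apply hP₁odd
      exact R₁.add_mem (hR₀R₁ _ (hP₀mem r) _ (hP₁mem s))
        (by rw [mul_comm]; exact hR₀R₁ _ (hP₀mem s) _ (hP₁mem r))
    calc P₁ (r * s) = P₁ ((r - P₁ r) * (s - P₁ s)) +
          P₁ ((r - P₁ r) * P₁ s + P₁ r * (s - P₁ s)) := by
            rw [← map_add]; congr 1; rw [hexp, hzero r s, add_zero]
      _ = (r - P₁ r) * P₁ s + P₁ r * (s - P₁ s) := by rw [h1, h2, zero_add]
  have hmul₀ : ∀ r s : R, r * s - P₁ (r * s) = (r - P₁ r) * (s - P₁ s) := by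
    intro r s
    rw [hmul r s]
    linear_combination hzero r s
  -- the flatness criterion
  rw [Module.Flat.iff_lTensor_preserves_injective_linearMap]
  intro N P _ _ _ _ f hf
  -- K-module structures on N and P via restriction of scalars
  letI : Module K N := Module.compHom N (algebraMap K R)
  letI : Module K P := Module.compHom P (algebraMap K R)
  have hKsmulN : ∀ (k : K) (n : N), k • n = (algebraMap K R k) • n := fun _ _ => rfl
  have hKsmulP : ∀ (k : K) (p : P), k • p = (algebraMap K R k) • p := fun _ _ => rfl
  haveI : IsScalarTower K R N := ⟨fun k r n => by
    rw [hKsmulN, Algebra.smul_def, mul_smul]⟩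
  haveI : IsScalarTower K R P := ⟨fun k r p => by
    rw [hKsmulP, Algebra.smul_def, mul_smul]⟩
  -- the twisted module structures
  letI instKN : Module K (TwistPair N) := inferInstanceAs (Module K (N × N))
  letI instKP : Module K (TwistPair P) := inferInstanceAs (Module K (P × P))
  letI instRN : Module R (TwistPair N) :=
    twistModule P₁.toAddMonoidHom hone hmul hmul₀ hzero N
  letI instRP : Module R (TwistPair P) :=
    twistModule P₁.toAddMonoidHom hone hmul hmul₀ hzero P
  have hsmN : ∀ (r : R) (x : TwistPair N),
      r • x = (((r - P₁ r) • x.1 + P₁ r • x.2 : N), (P₁ r • x.1 + (r - P₁ r) • x.2 : N)) :=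
    fun _ _ => rfl
  have hsmP : ∀ (r : R) (x : TwistPair P),
      r • x = (((r - P₁ r) • x.1 + P₁ r • x.2 : P), (P₁ r • x.1 + (r - P₁ r) • x.2 : P)) :=
    fun _ _ => rfl
  have hksmN : ∀ (k : K) (x : TwistPair N),
      k • x = ((algebraMap K R k • x.1 : N), (algebraMap K R k • x.2 : N)) := fun _ _ => rfl
  have hksmP : ∀ (k : K) (x : TwistPair P),
      k • x = ((algebraMap K R k • x.1 : P), (algebraMap K R k • x.2 : P)) := fun _ _ => rfl
  haveI instTN : IsScalarTower K R (TwistPair N) := ⟨fun k r x => by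
    rw [hsmN, hksmN]
    have h1 : k • r - P₁ (k • r) = algebraMap K R k * (r - P₁ r) := by
      rw [map_smul, ← smul_sub, Algebra.smul_def]
    have h2 : P₁ (k • r) = algebraMap K R k * P₁ r := by
      rw [map_smul, Algebra.smul_def]
    refine Prod.ext ?_ ?_ <;>
    · show _ = (algebraMap K R k) • (_ + _ : N)
      rw [h1, h2]
      simp only [smul_add, mul_smul, LinearMap.toAddMonoidHom_coe]⟩
  haveI instTP : IsScalarTower K R (TwistPair P) := ⟨fun k r x => by
    rw [hsmP, hksmP]
    have h1 : k • r - P₁ (k • r) = algebraMap K R k * (r - P₁ r) := by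
      rw [map_smul, ← smul_sub, Algebra.smul_def]
    have h2 : P₁ (k • r) = algebraMap K R k * P₁ r := by
      rw [map_smul, Algebra.smul_def]
    refine Prod.ext ?_ ?_ <;>
    · show _ = (algebraMap K R k) • (_ + _ : P)
      rw [h1, h2]
      simp only [smul_add, mul_smul, LinearMap.toAddMonoidHom_coe]⟩
  -- the gradings
  let V₀ : Submodule K (TwistPair N) :=
    { carrier := {x | x.2 = 0}
      add_mem' := by intro a b ha hb; show (a.2 + b.2 : N) = 0; rw [ha, hb, add_zero]
      zero_mem' := rfl
      smul_mem' := by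
        intro k x hx
        show (algebraMap K R k • x.2 : N) = 0
        rw [show (x.2 : N) = 0 from hx, smul_zero] }
  let V₁ : Submodule K (TwistPair N) :=
    { carrier := {x | x.1 = 0}
      add_mem' := by intro a b ha hb; show (a.1 + b.1 : N) = 0; rw [ha, hb, add_zero]
      zero_mem' := rfl
      smul_mem' := by
        intro k x hx
        show (algebraMap K R k • x.1 : N) = 0
        rw [show (x.1 : N) = 0 from hx, smul_zero] }
  let W₀ : Submodule K (TwistPair P) :=
    { carrier := {x | x.2 = 0}
      add_mem' := by intro a b ha hb; show (a.2 + b.2 : P) = 0; rw [ha, hb, add_zero]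
      zero_mem' := rfl
      smul_mem' := by
        intro k x hx
        show (algebraMap K R k • x.2 : P) = 0
        rw [show (x.2 : P) = 0 from hx, smul_zero] }
  let W₁ : Submodule K (TwistPair P) :=
    { carrier := {x | x.1 = 0}
      add_mem' := by intro a b ha hb; show (a.1 + b.1 : P) = 0; rw [ha, hb, add_zero]
      zero_mem' := rfl
      smul_mem' := by
        intro k x hx
        show (algebraMap K R k • x.1 : P) = 0
        rw [show (x.1 : P) = 0 from hx, smul_zero] }
  have hVcompl : IsCompl V₀ V₁ := by
    constructor
    · rw [disjoint_iff]
      rw [eq_bot_iff]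
      rintro x ⟨h0, h1⟩
      exact Prod.ext h1 h0
    · rw [codisjoint_iff, eq_top_iff]
      rintro x -
      have : x = ((x.1, 0) : TwistPair N) + ((0, x.2) : TwistPair N) := by
        refine Prod.ext ?_ ?_ <;> show _ = (_ + _ : N) <;> simp
      rw [this]
      exact Submodule.add_mem _ (Submodule.mem_sup_left rfl) (Submodule.mem_sup_right rfl)
  have hWcompl : IsCompl W₀ W₁ := by
    constructor
    · rw [disjoint_iff]
      rw [eq_bot_iff]
      rintro x ⟨h0, h1⟩
      exact Prod.ext h1 h0
    · rw [codisjoint_iff, eq_top_iff]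
      rintro x -
      have : x = ((x.1, 0) : TwistPair P) + ((0, x.2) : TwistPair P) := by
        refine Prod.ext ?_ ?_ <;> show _ = (_ + _ : P) <;> simp
      rw [this]
      exact Submodule.add_mem _ (Submodule.mem_sup_left rfl) (Submodule.mem_sup_right rfl)
  have hV01 : ∀ r ∈ R₁, ∀ v ∈ V₀, r • v ∈ V₁ := by
    intro r hr v hv
    show ((r • v).1 : N) = 0
    rw [hsmN, hP₁odd r hr]
    show ((r - r) • v.1 + r • v.2 : N) = 0
    rw [show (v.2 : N) = 0 from hv]
    simp
  have hV10 : ∀ r ∈ R₁, ∀ v ∈ V₁, r • v ∈ V₀ := by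
    intro r hr v hv
    show ((r • v).2 : N) = 0
    rw [hsmN, hP₁odd r hr]
    show (r • v.1 + (r - r) • v.2 : N) = 0
    rw [show (v.1 : N) = 0 from hv]
    simp
  have hW01 : ∀ r ∈ R₁, ∀ w ∈ W₀, r • w ∈ W₁ := by
    intro r hr v hv
    show ((r • v).1 : P) = 0
    rw [hsmP, hP₁odd r hr]
    show ((r - r) • v.1 + r • v.2 : P) = 0
    rw [show (v.2 : P) = 0 from hv]
    simp
  have hW10 : ∀ r ∈ R₁, ∀ w ∈ W₁, r • w ∈ W₀ := by
    intro r hr v hv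
    show ((r • v).2 : P) = 0
    rw [hsmP, hP₁odd r hr]
    show (r • v.1 + (r - r) • v.2 : P) = 0
    rw [show (v.1 : P) = 0 from hv]
    simp
  -- the maps
  let F : TwistPair N →ₗ[R] TwistPair P :=
    { toFun := fun x => ((f x.1 : P), (f x.2 : P))
      map_add' := fun x y => by
        refine Prod.ext ?_ ?_ <;> show f (_ + _) = (_ + _ : P) <;> rw [map_add]
      map_smul' := fun r x => by
        simp only [RingHom.id_apply]
        show ((f ((r - P₁ r) • x.1 + P₁ r • x.2), f (P₁ r • x.1 + (r - P₁ r) • x.2)) : TwistPair P)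
          = (((r - P₁ r) • f x.1 + P₁ r • f x.2 : P), (P₁ r • f x.1 + (r - P₁ r) • f x.2 : P))
        refine Prod.ext ?_ ?_ <;>
        · show f (_ + _) = (_ + _ : P)
          simp only [map_add, map_smul] }
  let ιN : N →ₗ[R] TwistPair N :=
    { toFun := fun n => ((n : N), (n : N))
      map_add' := fun a b => rfl
      map_smul' := fun r n => by
        simp only [RingHom.id_apply]
        show (((r • n : N), (r • n : N)) : TwistPair N)
          = (((r - P₁ r) • n + P₁ r • n : N), (P₁ r • n + (r - P₁ r) • n : N))
        refine Prod.ext ?_ ?_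
        · show r • n = ((r - P₁ r) • n + P₁ r • n : N)
          rw [sub_smul]; abel
        · show r • n = (P₁ r • n + (r - P₁ r) • n : N)
          rw [sub_smul]; abel }
  let ιP : P →ₗ[R] TwistPair P :=
    { toFun := fun p => ((p : P), (p : P))
      map_add' := fun a b => rfl
      map_smul' := fun r p => by
        simp only [RingHom.id_apply]
        show (((r • p : P), (r • p : P)) : TwistPair P)
          = (((r - P₁ r) • p + P₁ r • p : P), (P₁ r • p + (r - P₁ r) • p : P))
        refine Prod.ext ?_ ?_
        · show r • p = ((r - P₁ r) • p + P₁ r • p : P)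
          rw [sub_smul]; abel
        · show r • p = (P₁ r • p + (r - P₁ r) • p : P)
          rw [sub_smul]; abel }
  let σN : TwistPair N →ₗ[R] N :=
    { toFun := fun x => (x.1 + x.2 : N)
      map_add' := fun x y => by
        show ((x.1 + y.1) + (x.2 + y.2) : N) = (x.1 + x.2) + (y.1 + y.2)
        abel
      map_smul' := fun r x => by
        simp only [RingHom.id_apply]
        show (((r - P₁ r) • x.1 + P₁ r • x.2) + (P₁ r • x.1 + (r - P₁ r) • x.2) : N)
          = r • (x.1 + x.2)
        simp only [sub_smul, smul_add]
        abel }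
  have hF₀ : ∀ v ∈ V₀, F v ∈ W₀ := by
    intro v hv
    show f v.2 = 0
    rw [show (v.2 : N) = 0 from hv, map_zero]
  have hF₁ : ∀ v ∈ V₁, F v ∈ W₁ := by
    intro v hv
    show f v.1 = 0
    rw [show (v.1 : N) = 0 from hv, map_zero]
  have hFinj : Function.Injective F := by
    intro x y hxy
    have h1 : f x.1 = f y.1 := congrArg Prod.fst hxy
    have h2 : f x.2 = f y.2 := congrArg Prod.snd hxy
    exact Prod.ext (hf h1) (hf h2)
  have hFtens : Function.Injective (LinearMap.lTensor M F) :=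
    hsflat (TwistPair N) (TwistPair P) V₀ V₁ W₀ W₁ hVcompl hWcompl
      hV01 hV10 hW01 hW10 F hF₀ hF₁ hFinj
  -- conclude
  have hcomp1 : F ∘ₗ ιN = ιP ∘ₗ f := LinearMap.ext fun n => rfl
  have hσι : σN ∘ₗ ιN = (algebraMap K R 2) • (LinearMap.id : N →ₗ[R] N) := by
    refine LinearMap.ext fun n => ?_
    show n + n = (algebraMap K R 2) • n
    rw [map_ofNat, two_smul]
  intro x y hxy
  have hz : LinearMap.lTensor M f (x - y) = 0 := by rw [map_sub, hxy, sub_self]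
  have h1 : LinearMap.lTensor M F (LinearMap.lTensor M ιN (x - y)) = 0 := by
    rw [← LinearMap.lTensor_comp_apply, hcomp1, LinearMap.lTensor_comp_apply, hz, map_zero]
  have h2 : LinearMap.lTensor M ιN (x - y) = 0 :=
    hFtens (by rw [h1, map_zero])
  have h3 : (algebraMap K R 2) • (x - y) = 0 := by
    have h4 : LinearMap.lTensor M (σN ∘ₗ ιN) (x - y) = 0 := by
      rw [LinearMap.lTensor_comp_apply, h2, map_zero]
    rw [hσι, LinearMap.lTensor_smul, LinearMap.smul_apply, LinearMap.lTensor_id,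
      LinearMap.id_apply] at h4
    exact h4
  have h5 : (algebraMap K R (2⁻¹ : K)) • ((algebraMap K R 2) • (x - y)) = 0 := by
    rw [h3, smul_zero]
  rw [smul_smul, ← map_mul, inv_mul_cancel₀ (two_ne_zero), map_one, one_smul] at h5
  exact sub_eq_zero.mp h5
end
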